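/- arXiv:1504.03794 — 3 statements merged into one kernel-verified Lean document; each statement's English description precedes it below -/
import Mathlib

section
/- Let k be a field and l ≥ 2. Every element of Sp(2l,k) can be written as a finite product of elementary symplectic matrices x_{i,j}(t) = I + t(e_{i,j} − e_{−j,−i}) (i ≠ j), x_{i,−j}(t) = I + t(e_{i,−j} + e_{j,−i}) (i < j), x_{−i,j}(t) = I + t(e_{−i,j} + e_{−j,i}) (i < j), x_{i,−i}(t) = I + t·e_{i,−i}, x_{−i,i}(t) = I + t·e_{−i,i}. -/
open Matrix

/-- An elementary symplectic matrix of Sp(2l,k), rows indexed {1,…,l} ⊕ {-1,…,-l}. -/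
def IsElementarySymplectic (k : Type*) [Field k] (l : ℕ)
    (x : Matrix (Fin l ⊕ Fin l) (Fin l ⊕ Fin l) k) : Prop :=
  (∃ (i j : Fin l) (t : k), i ≠ j ∧
      x = 1 + t • (Matrix.single (Sum.inl i) (Sum.inl j) 1
        - Matrix.single (Sum.inr j) (Sum.inr i) 1)) ∨
  (∃ (i j : Fin l) (t : k), i < j ∧
      x = 1 + t • (Matrix.single (Sum.inl i) (Sum.inr j) 1
        + Matrix.single (Sum.inl j) (Sum.inr i) 1)) ∨
  (∃ (i j : Fin l) (t : k), i < j ∧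
      x = 1 + t • (Matrix.single (Sum.inr i) (Sum.inl j) 1
        + Matrix.single (Sum.inr j) (Sum.inl i) 1)) ∨
  (∃ (i : Fin l) (t : k), x = 1 + t • Matrix.single (Sum.inl i) (Sum.inr i) 1) ∨
  (∃ (i : Fin l) (t : k), x = 1 + t • Matrix.single (Sum.inr i) (Sum.inl i) 1)

namespace SpGen14

variable {k : Type*} [Field k] {l : ℕ}

abbrev MM (k : Type*) (l : ℕ) := Matrix (Fin l ⊕ Fin l) (Fin l ⊕ Fin l) k

def Jm (k : Type*) [Field k] (l : ℕ) : MM k l := fromBlocks 0 1 (-1) 0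

lemma transpose_std {n : Type*} [DecidableEq n] (i j : n) (c : k) :
    (Matrix.single i j c)ᵀ = Matrix.single j i c := by
  ext a b
  simp [Matrix.single, transpose_apply, and_comm]

lemma std_ll (i j : Fin l) (c : k) :
    Matrix.single (Sum.inl i) (Sum.inl j) c
      = fromBlocks (Matrix.single i j c) 0 0 (0 : Matrix (Fin l) (Fin l) k) := by
  ext r s
  cases r <;> cases s <;> simp [Matrix.single, fromBlocks]

lemma std_lr (i j : Fin l) (c : k) :
    Matrix.single (Sum.inl i) (Sum.inr j) c
      = fromBlocks 0 (Matrix.single i j c) (0 : Matrix (Fin l) (Fin l) k) 0 := by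
  ext r s
  cases r <;> cases s <;> simp [Matrix.single, fromBlocks]

lemma std_rl (i j : Fin l) (c : k) :
    Matrix.single (Sum.inr i) (Sum.inl j) c
      = fromBlocks 0 (0 : Matrix (Fin l) (Fin l) k) (Matrix.single i j c) 0 := by
  ext r s
  cases r <;> cases s <;> simp [Matrix.single, fromBlocks]

lemma std_rr (i j : Fin l) (c : k) :
    Matrix.single (Sum.inr i) (Sum.inr j) c
      = fromBlocks (0 : Matrix (Fin l) (Fin l) k) 0 0 (Matrix.single i j c) := by
  ext r s
  cases r <;> cases s <;> simp [Matrix.single, fromBlocks]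

def Symp (g : MM k l) : Prop := gᵀ * Jm k l * g = Jm k l

lemma symp_unip (N : MM k l) (h2 : Nᵀ * Jm k l = -(Jm k l * N))
    (h1 : Nᵀ * (Jm k l * N) = 0) (t : k) : Symp (1 + t • N) := by
  unfold Symp
  have expand : (1 + t • N)ᵀ * Jm k l * (1 + t • N)
      = Jm k l + (t • (Jm k l * N) + t • (Nᵀ * Jm k l)) + (t * t) • (Nᵀ * (Jm k l * N)) := by
    rw [transpose_add, transpose_one, transpose_smul]
    simp only [add_mul, mul_add, one_mul, mul_one, smul_mul_assoc, mul_smul_comm, smul_smul]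
    noncomm_ring
    rw [smul_add, smul_smul]
  rw [expand, h1, h2, smul_neg, smul_zero, add_zero, add_neg_cancel, add_zero]

lemma block1_h2 (A : Matrix (Fin l) (Fin l) k) :
    (fromBlocks A 0 0 (-Aᵀ))ᵀ * Jm k l = -(Jm k l * fromBlocks A 0 0 (-Aᵀ)) := by
  simp [Jm, fromBlocks_transpose, fromBlocks_multiply, fromBlocks_neg]

lemma block1_h1 (A : Matrix (Fin l) (Fin l) k) (hA : A * A = 0) :
    (fromBlocks A 0 0 (-Aᵀ))ᵀ * (Jm k l * fromBlocks A 0 0 (-Aᵀ)) = 0 := by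
  have hAT : Aᵀ * Aᵀ = 0 := by rw [← transpose_mul, hA, transpose_zero]
  simp [Jm, fromBlocks_transpose, fromBlocks_multiply, hA, hAT, ← fromBlocks_zero]

lemma block1_sq (A : Matrix (Fin l) (Fin l) k) (hA : A * A = 0) :
    (fromBlocks A 0 0 (-Aᵀ) : MM k l) * fromBlocks A 0 0 (-Aᵀ) = 0 := by
  have hAT : Aᵀ * Aᵀ = 0 := by rw [← transpose_mul, hA, transpose_zero]
  simp [fromBlocks_multiply, hA, hAT, ← fromBlocks_zero]

lemma block2_h2 (B : Matrix (Fin l) (Fin l) k) (hB : Bᵀ = B) :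
    (fromBlocks 0 B 0 0 : MM k l)ᵀ * Jm k l = -(Jm k l * fromBlocks 0 B 0 0) := by
  simp [Jm, fromBlocks_transpose, fromBlocks_multiply, fromBlocks_neg, hB]

lemma block2_h1 (B : Matrix (Fin l) (Fin l) k) :
    (fromBlocks 0 B 0 0 : MM k l)ᵀ * (Jm k l * fromBlocks 0 B 0 0) = 0 := by
  simp [Jm, fromBlocks_transpose, fromBlocks_multiply, ← fromBlocks_zero]

lemma block2_sq (B : Matrix (Fin l) (Fin l) k) :
    (fromBlocks 0 B 0 0 : MM k l) * fromBlocks 0 B 0 0 = 0 := by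
  simp [fromBlocks_multiply, ← fromBlocks_zero]

lemma block3_h2 (C : Matrix (Fin l) (Fin l) k) (hC : Cᵀ = C) :
    (fromBlocks 0 0 C 0 : MM k l)ᵀ * Jm k l = -(Jm k l * fromBlocks 0 0 C 0) := by
  simp [Jm, fromBlocks_transpose, fromBlocks_multiply, fromBlocks_neg, hC]

lemma block3_h1 (C : Matrix (Fin l) (Fin l) k) :
    (fromBlocks 0 0 C 0 : MM k l)ᵀ * (Jm k l * fromBlocks 0 0 C 0) = 0 := by
  simp [Jm, fromBlocks_transpose, fromBlocks_multiply, ← fromBlocks_zero]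

lemma block3_sq (C : Matrix (Fin l) (Fin l) k) :
    (fromBlocks 0 0 C 0 : MM k l) * fromBlocks 0 0 C 0 = 0 := by
  simp [fromBlocks_multiply, ← fromBlocks_zero]

def N1 (i j : Fin l) : MM k l :=
  Matrix.single (Sum.inl i) (Sum.inl j) 1 - Matrix.single (Sum.inr j) (Sum.inr i) 1
def N2 (i j : Fin l) : MM k l :=
  Matrix.single (Sum.inl i) (Sum.inr j) 1 + Matrix.single (Sum.inl j) (Sum.inr i) 1
def N3 (i j : Fin l) : MM k l :=
  Matrix.single (Sum.inr i) (Sum.inl j) 1 + Matrix.single (Sum.inr j) (Sum.inl i) 1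
def N4 (i : Fin l) : MM k l := Matrix.single (Sum.inl i) (Sum.inr i) 1
def N5 (i : Fin l) : MM k l := Matrix.single (Sum.inr i) (Sum.inl i) 1

def T1 (i j : Fin l) (t : k) : MM k l := 1 + t • N1 i j
def T2 (i j : Fin l) (t : k) : MM k l := 1 + t • N2 i j
def T3 (i j : Fin l) (t : k) : MM k l := 1 + t • N3 i j
def T4 (i : Fin l) (t : k) : MM k l := 1 + t • N4 i
def T5 (i : Fin l) (t : k) : MM k l := 1 + t • N5 i

lemma elem_T1 {i j : Fin l} (h : i ≠ j) (t : k) : IsElementarySymplectic k l (T1 i j t) :=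
  Or.inl ⟨i, j, t, h, rfl⟩
lemma elem_T2 {i j : Fin l} (h : i < j) (t : k) : IsElementarySymplectic k l (T2 i j t) :=
  Or.inr (Or.inl ⟨i, j, t, h, rfl⟩)
lemma elem_T3 {i j : Fin l} (h : i < j) (t : k) : IsElementarySymplectic k l (T3 i j t) :=
  Or.inr (Or.inr (Or.inl ⟨i, j, t, h, rfl⟩))
lemma elem_T4 (i : Fin l) (t : k) : IsElementarySymplectic k l (T4 i t) :=
  Or.inr (Or.inr (Or.inr (Or.inl ⟨i, t, rfl⟩)))
lemma elem_T5 (i : Fin l) (t : k) : IsElementarySymplectic k l (T5 i t) :=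
  Or.inr (Or.inr (Or.inr (Or.inr ⟨i, t, rfl⟩)))

lemma N1_block (i j : Fin l) :
    (N1 i j : MM k l) = fromBlocks (Matrix.single i j 1) 0 0 (-(Matrix.single i j (1 : k))ᵀ) := by
  rw [transpose_std]
  ext r s
  cases r <;> cases s <;> simp [N1, Matrix.single, fromBlocks, and_comm]

lemma N2_block (i j : Fin l) :
    (N2 i j : MM k l) = fromBlocks 0 (Matrix.single i j 1 + Matrix.single j i 1) 0 0 := by
  rw [N2, std_lr, std_lr, fromBlocks_add]
  simp

lemma N3_block (i j : Fin l) :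
    (N3 i j : MM k l) = fromBlocks 0 0 (Matrix.single i j 1 + Matrix.single j i 1) 0 := by
  rw [N3, std_rl, std_rl, fromBlocks_add]
  simp

lemma N4_block (i : Fin l) : (N4 i : MM k l) = fromBlocks 0 (Matrix.single i i 1) 0 0 := std_lr i i 1
lemma N5_block (i : Fin l) : (N5 i : MM k l) = fromBlocks 0 0 (Matrix.single i i 1) 0 := std_rl i i 1

lemma std_sq {i j : Fin l} (h : i ≠ j) :
    Matrix.single i j (1:k) * Matrix.single i j 1 = 0 :=
  single_mul_single_of_ne (c := 1) i j i (Ne.symm h) 1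

lemma symm_BB (i j : Fin l) :
    (Matrix.single i j (1:k) + Matrix.single j i 1)ᵀ = Matrix.single i j 1 + Matrix.single j i 1 := by
  rw [transpose_add, transpose_std, transpose_std, add_comm]

lemma symp_elem {x : MM k l} (h : IsElementarySymplectic k l x) : Symp x := by
  rcases h with ⟨i,j,t,hij,rfl⟩ | ⟨i,j,t,hij,rfl⟩ | ⟨i,j,t,hij,rfl⟩ | ⟨i,t,rfl⟩ | ⟨i,t,rfl⟩
  · have h : Symp (1 + t • (N1 i j : MM k l)) := by
      rw [N1_block]; exact symp_unip _ (block1_h2 _) (block1_h1 _ (std_sq hij)) t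
    exact h
  · have h : Symp (1 + t • (N2 i j : MM k l)) := by
      rw [N2_block]; exact symp_unip _ (block2_h2 _ (symm_BB i j)) (block2_h1 _) t
    exact h
  · have h : Symp (1 + t • (N3 i j : MM k l)) := by
      rw [N3_block]; exact symp_unip _ (block3_h2 _ (symm_BB i j)) (block3_h1 _) t
    exact h
  · have h : Symp (1 + t • (N4 i : MM k l)) := by
      rw [N4_block]; exact symp_unip _ (block2_h2 _ (by rw [transpose_std])) (block2_h1 _) t
    exact h
  · have h : Symp (1 + t • (N5 i : MM k l)) := by
      rw [N5_block]; exact symp_unip _ (block3_h2 _ (by rw [transpose_std])) (block3_h1 _) t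
    exact h

lemma unip_inv_mul (N : MM k l) (hN : N * N = 0) (t : k) :
    (1 + t • N) * (1 + (-t) • N) = 1 := by
  simp only [mul_add, add_mul, one_mul, mul_one, smul_mul_assoc, mul_smul_comm, smul_smul, hN,
    smul_zero, add_zero]
  rw [add_assoc, ← add_smul, add_neg_cancel, zero_smul, add_zero]

lemma elem_inv {x : MM k l} (h : IsElementarySymplectic k l x) :
    ∃ y : MM k l, IsElementarySymplectic k l y ∧ y * x = 1 ∧ x * y = 1 := by
  rcases h with ⟨i,j,t,hij,rfl⟩ | ⟨i,j,t,hij,rfl⟩ | ⟨i,j,t,hij,rfl⟩ | ⟨i,t,rfl⟩ | ⟨i,t,rfl⟩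
  · have hsq : (N1 i j : MM k l) * N1 i j = 0 := by
      rw [N1_block]; exact block1_sq _ (std_sq hij)
    refine ⟨T1 i j (-t), elem_T1 hij _, ?_, ?_⟩
    · have := unip_inv_mul (N1 i j) hsq (-t); rw [neg_neg] at this; exact this
    · exact unip_inv_mul (N1 i j) hsq t
  · have hsq : (N2 i j : MM k l) * N2 i j = 0 := by rw [N2_block]; exact block2_sq _
    refine ⟨T2 i j (-t), elem_T2 hij _, ?_, ?_⟩
    · have := unip_inv_mul (N2 i j) hsq (-t); rw [neg_neg] at this; exact this
    · exact unip_inv_mul (N2 i j) hsq t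
  · have hsq : (N3 i j : MM k l) * N3 i j = 0 := by rw [N3_block]; exact block3_sq _
    refine ⟨T3 i j (-t), elem_T3 hij _, ?_, ?_⟩
    · have := unip_inv_mul (N3 i j) hsq (-t); rw [neg_neg] at this; exact this
    · exact unip_inv_mul (N3 i j) hsq t
  · have hsq : (N4 i : MM k l) * N4 i = 0 := by rw [N4_block]; exact block2_sq _
    refine ⟨T4 i (-t), elem_T4 _ _, ?_, ?_⟩
    · have := unip_inv_mul (N4 i) hsq (-t); rw [neg_neg] at this; exact this
    · exact unip_inv_mul (N4 i) hsq t
  · have hsq : (N5 i : MM k l) * N5 i = 0 := by rw [N5_block]; exact block3_sq _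
    refine ⟨T5 i (-t), elem_T5 _ _, ?_, ?_⟩
    · have := unip_inv_mul (N5 i) hsq (-t); rw [neg_neg] at this; exact this
    · exact unip_inv_mul (N5 i) hsq t

def InE (g : MM k l) : Prop :=
  ∃ L : List (MM k l), (∀ x ∈ L, IsElementarySymplectic k l x) ∧ L.prod = g

lemma InE_one : InE (1 : MM k l) := ⟨[], by simp, by simp⟩

lemma InE_mul {a b : MM k l} (ha : InE a) (hb : InE b) : InE (a * b) := by
  obtain ⟨L1, h1, e1⟩ := ha
  obtain ⟨L2, h2, e2⟩ := hb
  exact ⟨L1 ++ L2, fun x hx => by rcases List.mem_append.mp hx with h | h; exacts [h1 x h, h2 x h],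
    by rw [List.prod_append, e1, e2]⟩

lemma InE_elem {x : MM k l} (h : IsElementarySymplectic k l x) : InE x :=
  ⟨[x], by simpa using h, by simp⟩

lemma symp_one : Symp (1 : MM k l) := by simp [Symp]

lemma symp_mul {a b : MM k l} (ha : Symp a) (hb : Symp b) : Symp (a * b) := by
  unfold Symp at *
  rw [transpose_mul]
  calc bᵀ * aᵀ * Jm k l * (a * b) = bᵀ * (aᵀ * Jm k l * a) * b := by noncomm_ring
  _ = bᵀ * Jm k l * b := by rw [ha]
  _ = Jm k l := hb

lemma InE_symp {g : MM k l} (hg : InE g) : Symp g := by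
  obtain ⟨L, hL, rfl⟩ := hg
  induction L with
  | nil => exact symp_one
  | cons x L ih =>
    rw [List.prod_cons]
    exact symp_mul (symp_elem (hL x (by simp))) (ih fun y hy => hL y (by simp [hy]))

lemma InE_inv {g : MM k l} (hg : InE g) : ∃ g' : MM k l, InE g' ∧ g' * g = 1 ∧ g * g' = 1 := by
  obtain ⟨L, hL, rfl⟩ := hg
  induction L with
  | nil => exact ⟨1, InE_one, by simp, by simp⟩
  | cons x L ih =>
    obtain ⟨h', hInE, hl, hr⟩ := ih (fun y hy => hL y (by simp [hy]))
    obtain ⟨y, hy, hyl, hyr⟩ := elem_inv (hL x (by simp))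
    rw [List.prod_cons]
    refine ⟨h' * y, InE_mul hInE (InE_elem hy), ?_, ?_⟩
    · calc h' * y * (x * L.prod) = h' * (y * x) * L.prod := by noncomm_ring
      _ = 1 := by rw [hyl, mul_one, hl]
    · calc x * L.prod * (h' * y) = x * (L.prod * h') * y := by noncomm_ring
      _ = 1 := by rw [hr, mul_one, hyr]

lemma mulVec_unip (N : MM k l) (t : k) (v : (Fin l ⊕ Fin l) → k) :
    (1 + t • N) *ᵥ v = v + t • (N *ᵥ v) := by
  rw [add_mulVec, one_mulVec, smul_mulVec]

lemma T1_apply (i j : Fin l) (t : k) (v : (Fin l ⊕ Fin l) → k) (r : Fin l ⊕ Fin l) :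
    (T1 i j t *ᵥ v) r = v r + t * ((if r = Sum.inl i then v (Sum.inl j) else 0)
      - (if r = Sum.inr j then v (Sum.inr i) else 0)) := by
  rw [T1, mulVec_unip, N1, sub_mulVec, single_mulVec, single_mulVec]
  simp [Function.update_apply]

lemma T2_apply (i j : Fin l) (t : k) (v : (Fin l ⊕ Fin l) → k) (r : Fin l ⊕ Fin l) :
    (T2 i j t *ᵥ v) r = v r + t * ((if r = Sum.inl i then v (Sum.inr j) else 0)
      + (if r = Sum.inl j then v (Sum.inr i) else 0)) := by
  rw [T2, mulVec_unip, N2, add_mulVec, single_mulVec, single_mulVec]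
  simp [Function.update_apply, mul_add]

lemma T3_apply (i j : Fin l) (t : k) (v : (Fin l ⊕ Fin l) → k) (r : Fin l ⊕ Fin l) :
    (T3 i j t *ᵥ v) r = v r + t * ((if r = Sum.inr i then v (Sum.inl j) else 0)
      + (if r = Sum.inr j then v (Sum.inl i) else 0)) := by
  rw [T3, mulVec_unip, N3, add_mulVec, single_mulVec, single_mulVec]
  simp [Function.update_apply, mul_add]

lemma T4_apply (i : Fin l) (t : k) (v : (Fin l ⊕ Fin l) → k) (r : Fin l ⊕ Fin l) :
    (T4 i t *ᵥ v) r = v r + t * (if r = Sum.inl i then v (Sum.inr i) else 0) := by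
  rw [T4, mulVec_unip, N4, single_mulVec]
  simp [Function.update_apply]

lemma T5_apply (i : Fin l) (t : k) (v : (Fin l ⊕ Fin l) → k) (r : Fin l ⊕ Fin l) :
    (T5 i t *ᵥ v) r = v r + t * (if r = Sum.inr i then v (Sum.inl i) else 0) := by
  rw [T5, mulVec_unip, N5, single_mulVec]
  simp [Function.update_apply]

lemma inl_ne_inr (a b : Fin l) : (Sum.inl a : Fin l ⊕ Fin l) ≠ Sum.inr b := by simp
lemma inr_ne_inl (a b : Fin l) : (Sum.inr a : Fin l ⊕ Fin l) ≠ Sum.inl b := by simp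
lemma inl_ne_inl {a b : Fin l} (h : (a : ℕ) ≠ (b : ℕ)) :
    (Sum.inl a : Fin l ⊕ Fin l) ≠ Sum.inl b := by
  simpa [Fin.ext_iff] using h
lemma inr_ne_inr {a b : Fin l} (h : (a : ℕ) ≠ (b : ℕ)) :
    (Sum.inr a : Fin l ⊕ Fin l) ≠ Sum.inr b := by
  simpa [Fin.ext_iff] using h

section coords
variable (i j : Fin l) (t : k) (v : (Fin l ⊕ Fin l) → k)

lemma T1_at_inl : (T1 i j t *ᵥ v) (Sum.inl i) = v (Sum.inl i) + t * v (Sum.inl j) := by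
  rw [T1_apply]; simp

lemma T1_at_inr : (T1 i j t *ᵥ v) (Sum.inr j) = v (Sum.inr j) - t * v (Sum.inr i) := by
  rw [T1_apply]; simp; ring

lemma T1_other {r : Fin l ⊕ Fin l} (h1 : r ≠ Sum.inl i) (h2 : r ≠ Sum.inr j) :
    (T1 i j t *ᵥ v) r = v r := by
  rw [T1_apply]; simp [h1, h2]

lemma T2_at_inl (hij : i ≠ j) :
    (T2 i j t *ᵥ v) (Sum.inl i) = v (Sum.inl i) + t * v (Sum.inr j) := by
  rw [T2_apply]; simp [hij]

lemma T2_at_inl' (hij : i ≠ j) :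
    (T2 i j t *ᵥ v) (Sum.inl j) = v (Sum.inl j) + t * v (Sum.inr i) := by
  rw [T2_apply]; simp [Ne.symm hij]

lemma T2_other {r : Fin l ⊕ Fin l} (h1 : r ≠ Sum.inl i) (h2 : r ≠ Sum.inl j) :
    (T2 i j t *ᵥ v) r = v r := by
  rw [T2_apply]; simp [h1, h2]

lemma T3_at_inr (hij : i ≠ j) :
    (T3 i j t *ᵥ v) (Sum.inr i) = v (Sum.inr i) + t * v (Sum.inl j) := by
  rw [T3_apply]; simp [hij]

lemma T3_at_inr' (hij : i ≠ j) :
    (T3 i j t *ᵥ v) (Sum.inr j) = v (Sum.inr j) + t * v (Sum.inl i) := by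
  rw [T3_apply]; simp [Ne.symm hij]

lemma T3_other {r : Fin l ⊕ Fin l} (h1 : r ≠ Sum.inr i) (h2 : r ≠ Sum.inr j) :
    (T3 i j t *ᵥ v) r = v r := by
  rw [T3_apply]; simp [h1, h2]

lemma T4_at : (T4 i t *ᵥ v) (Sum.inl i) = v (Sum.inl i) + t * v (Sum.inr i) := by
  rw [T4_apply]; simp

lemma T4_other {r : Fin l ⊕ Fin l} (h1 : r ≠ Sum.inl i) : (T4 i t *ᵥ v) r = v r := by
  rw [T4_apply]; simp [h1]

lemma T5_at : (T5 i t *ᵥ v) (Sum.inr i) = v (Sum.inr i) + t * v (Sum.inl i) := by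
  rw [T5_apply]; simp

lemma T5_other {r : Fin l ⊕ Fin l} (h1 : r ≠ Sum.inr i) : (T5 i t *ᵥ v) r = v r := by
  rw [T5_apply]; simp [h1]

end coords

section fixes
variable (i j : Fin l) (t : k)

lemma T1_fix {c : Fin l ⊕ Fin l} (h1 : c ≠ Sum.inl j) (h2 : c ≠ Sum.inr i) :
    T1 i j t *ᵥ Pi.single c 1 = Pi.single c 1 := by
  funext r
  rw [T1_apply, Pi.single_eq_of_ne (Ne.symm h1), Pi.single_eq_of_ne (Ne.symm h2)]
  simp

lemma T2_fix {c : Fin l ⊕ Fin l} (h1 : c ≠ Sum.inr j) (h2 : c ≠ Sum.inr i) :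
    T2 i j t *ᵥ Pi.single c 1 = Pi.single c 1 := by
  funext r
  rw [T2_apply, Pi.single_eq_of_ne (Ne.symm h1), Pi.single_eq_of_ne (Ne.symm h2)]
  simp

lemma T3_fix {c : Fin l ⊕ Fin l} (h1 : c ≠ Sum.inl j) (h2 : c ≠ Sum.inl i) :
    T3 i j t *ᵥ Pi.single c 1 = Pi.single c 1 := by
  funext r
  rw [T3_apply, Pi.single_eq_of_ne (Ne.symm h1), Pi.single_eq_of_ne (Ne.symm h2)]
  simp

lemma T4_fix {c : Fin l ⊕ Fin l} (h1 : c ≠ Sum.inr i) :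
    T4 i t *ᵥ Pi.single c 1 = Pi.single c 1 := by
  funext r
  rw [T4_apply, Pi.single_eq_of_ne (Ne.symm h1)]
  simp

lemma T5_fix {c : Fin l ⊕ Fin l} (h1 : c ≠ Sum.inl i) :
    T5 i t *ᵥ Pi.single c 1 = Pi.single c 1 := by
  funext r
  rw [T5_apply, Pi.single_eq_of_ne (Ne.symm h1)]
  simp

end fixes

def FixLow (m : ℕ) (h : MM k l) : Prop :=
  ∀ i : Fin l, (i : ℕ) < m →
    h *ᵥ Pi.single (Sum.inl i) 1 = Pi.single (Sum.inl i) 1 ∧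
    h *ᵥ Pi.single (Sum.inr i) 1 = Pi.single (Sum.inr i) 1

lemma FixLow_one (m : ℕ) : FixLow m (1 : MM k l) := fun i _ => ⟨one_mulVec _, one_mulVec _⟩

lemma FixLow_mul {m : ℕ} {a b : MM k l} (ha : FixLow m a) (hb : FixLow m b) :
    FixLow m (a * b) := by
  intro i hi
  constructor
  · rw [← mulVec_mulVec, (hb i hi).1, (ha i hi).1]
  · rw [← mulVec_mulVec, (hb i hi).2, (ha i hi).2]

lemma fin_ne_of_vne {a b : Fin l} (h : (a : ℕ) ≠ (b : ℕ)) : a ≠ b := fun hh => h (by rw [hh])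
lemma fin_vne_of_ne {a b : Fin l} (h : a ≠ b) : (a : ℕ) ≠ (b : ℕ) := fun hh => h (Fin.ext hh)

lemma clearA (m : Fin l) : ∀ (d : ℕ) (v : (Fin l ⊕ Fin l) → k), v (Sum.inl m) ≠ 0 →
    (∀ j : Fin l, ((j : ℕ) < (m : ℕ) ∨ (m : ℕ) + 1 + d ≤ (j : ℕ)) →
      v (Sum.inl j) = 0 ∧ v (Sum.inr j) = 0) →
    ∃ h : MM k l, InE h ∧ FixLow (m : ℕ) h ∧ (h *ᵥ v) (Sum.inl m) ≠ 0 ∧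
      ∀ j : Fin l, j ≠ m → (h *ᵥ v) (Sum.inl j) = 0 ∧ (h *ᵥ v) (Sum.inr j) = 0 := by
  intro d
  induction d with
  | zero =>
    intro v hm hsupp
    refine ⟨1, InE_one, FixLow_one _, by rw [one_mulVec]; exact hm, ?_⟩
    intro j hj
    rw [one_mulVec]
    exact hsupp j (by have := fin_vne_of_ne hj; omega)
  | succ d ih =>
    intro v hm hsupp
    by_cases hlt : (m : ℕ) + 1 + d < l
    · set j₀ : Fin l := ⟨(m : ℕ) + 1 + d, hlt⟩ with hj₀
      have hj₀v : (j₀ : ℕ) = (m : ℕ) + 1 + d := rfl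
      have hmj : (m : ℕ) ≠ (j₀ : ℕ) := by omega
      set t₁ : k := -(v (Sum.inr j₀)) / v (Sum.inl m) with ht₁
      set v₁ : (Fin l ⊕ Fin l) → k := T3 m j₀ t₁ *ᵥ v with hv₁
      have e₁a : ∀ r : Fin l, v₁ (Sum.inl r) = v (Sum.inl r) := fun r =>
        T3_other m j₀ t₁ v (inl_ne_inr r m) (inl_ne_inr r j₀)
      have e₁b : v₁ (Sum.inr j₀) = 0 := by
        rw [hv₁, T3_at_inr' m j₀ t₁ v (fin_ne_of_vne hmj), ht₁, div_mul_cancel₀ _ hm]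
        ring
      have e₁c : ∀ r : Fin l, (r : ℕ) ≠ (m : ℕ) → (r : ℕ) ≠ (j₀ : ℕ) →
          v₁ (Sum.inr r) = v (Sum.inr r) := fun r h1 h2 =>
        T3_other m j₀ t₁ v (inr_ne_inr h1) (inr_ne_inr h2)
      set t₂ : k := -(v (Sum.inl j₀)) / v (Sum.inl m) with ht₂
      set v₂ : (Fin l ⊕ Fin l) → k := T1 j₀ m t₂ *ᵥ v₁ with hv₂
      have e₂a : v₂ (Sum.inl j₀) = 0 := by
        rw [hv₂, T1_at_inl j₀ m t₂ v₁, e₁a, e₁a, ht₂, div_mul_cancel₀ _ hm]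
        ring
      have hm₂ : v₂ (Sum.inl m) ≠ 0 := by
        rw [hv₂, T1_other j₀ m t₂ v₁ (inl_ne_inl hmj) (inl_ne_inr m m), e₁a]
        exact hm
      have hsupp₂ : ∀ j : Fin l, ((j : ℕ) < (m : ℕ) ∨ (m : ℕ) + 1 + d ≤ (j : ℕ)) →
          v₂ (Sum.inl j) = 0 ∧ v₂ (Sum.inr j) = 0 := by
        intro j hj
        rcases hj with hj | hj
        · constructor
          · rw [hv₂, T1_other j₀ m t₂ v₁ (inl_ne_inl (by omega)) (inl_ne_inr j m), e₁a]
            exact (hsupp j (Or.inl hj)).1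
          · rw [hv₂, T1_other j₀ m t₂ v₁ (inr_ne_inl j j₀) (inr_ne_inr (by omega)),
              e₁c j (by omega) (by omega)]
            exact (hsupp j (Or.inl hj)).2
        · by_cases hjj : (j : ℕ) = (j₀ : ℕ)
          · have hjeq : j = j₀ := Fin.ext (by omega)
            rw [hjeq]
            refine ⟨e₂a, ?_⟩
            rw [hv₂, T1_other j₀ m t₂ v₁ (inr_ne_inl j₀ j₀) (inr_ne_inr (by omega)), e₁b]
          · have hjbig : (m : ℕ) + 1 + (d + 1) ≤ (j : ℕ) := by omega
            constructor
            · rw [hv₂, T1_other j₀ m t₂ v₁ (inl_ne_inl (by omega)) (inl_ne_inr j m), e₁a]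
              exact (hsupp j (Or.inr hjbig)).1
            · rw [hv₂, T1_other j₀ m t₂ v₁ (inr_ne_inl j j₀) (inr_ne_inr (by omega)),
                e₁c j (by omega) (by omega)]
              exact (hsupp j (Or.inr hjbig)).2
      obtain ⟨h, hInE, hFix, hnz, hzero⟩ := ih v₂ hm₂ hsupp₂
      have hcomp : (h * (T1 j₀ m t₂ * T3 m j₀ t₁)) *ᵥ v = h *ᵥ v₂ := by
        rw [← mulVec_mulVec, ← mulVec_mulVec]
      have fix1 : FixLow (m : ℕ) (T1 j₀ m t₂) := by
        intro i hi
        exact ⟨T1_fix j₀ m t₂ (inl_ne_inl (by omega)) (inl_ne_inr i j₀),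
          T1_fix j₀ m t₂ (inr_ne_inl i m) (inr_ne_inr (by omega))⟩
      have fix3 : FixLow (m : ℕ) (T3 m j₀ t₁) := by
        intro i hi
        exact ⟨T3_fix m j₀ t₁ (inl_ne_inl (by omega)) (inl_ne_inl (by omega)),
          T3_fix m j₀ t₁ (inr_ne_inl i j₀) (inr_ne_inl i m)⟩
      refine ⟨h * (T1 j₀ m t₂ * T3 m j₀ t₁),
        InE_mul hInE (InE_mul (InE_elem (elem_T1 (fin_ne_of_vne (Ne.symm hmj)) t₂))
          (InE_elem (elem_T3 (by rw [Fin.lt_def]; omega) t₁))),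
        FixLow_mul hFix (FixLow_mul fix1 fix3), ?_, ?_⟩
      · rw [hcomp]; exact hnz
      · intro j hj; rw [hcomp]; exact hzero j hj
    · apply ih v hm
      intro j hj
      rcases hj with hj | hj
      · exact hsupp j (Or.inl hj)
      · exact absurd j.isLt (by omega)

lemma clearB (m : Fin l) : ∀ (d : ℕ) (w : (Fin l ⊕ Fin l) → k), w (Sum.inr m) = 1 →
    (∀ j : Fin l, ((j : ℕ) < (m : ℕ) ∨ (m : ℕ) + 1 + d ≤ (j : ℕ)) →
      w (Sum.inl j) = 0 ∧ w (Sum.inr j) = 0) →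
    ∃ h : MM k l, InE h ∧ FixLow (m : ℕ) h ∧
      h *ᵥ Pi.single (Sum.inl m) 1 = Pi.single (Sum.inl m) 1 ∧
      (h *ᵥ w) (Sum.inr m) = 1 ∧
      ∀ j : Fin l, j ≠ m → (h *ᵥ w) (Sum.inl j) = 0 ∧ (h *ᵥ w) (Sum.inr j) = 0 := by
  intro d
  induction d with
  | zero =>
    intro w hw hsupp
    refine ⟨1, InE_one, FixLow_one _, one_mulVec _, by rw [one_mulVec]; exact hw, ?_⟩
    intro j hj
    rw [one_mulVec]
    exact hsupp j (by have := fin_vne_of_ne hj; omega)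
  | succ d ih =>
    intro w hw hsupp
    by_cases hlt : (m : ℕ) + 1 + d < l
    · set j₀ : Fin l := ⟨(m : ℕ) + 1 + d, hlt⟩ with hj₀
      have hj₀v : (j₀ : ℕ) = (m : ℕ) + 1 + d := rfl
      have hmj : (m : ℕ) ≠ (j₀ : ℕ) := by omega
      set t₁ : k := w (Sum.inr j₀) with ht₁
      set w₁ : (Fin l ⊕ Fin l) → k := T1 m j₀ t₁ *ᵥ w with hw₁
      have e₁a : ∀ r : Fin l, (r : ℕ) ≠ (m : ℕ) → w₁ (Sum.inl r) = w (Sum.inl r) :=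
        fun r h1 => T1_other m j₀ t₁ w (inl_ne_inl h1) (inl_ne_inr r j₀)
      have e₁b : w₁ (Sum.inr j₀) = 0 := by
        rw [hw₁, T1_at_inr m j₀ t₁ w, hw, ht₁]
        ring
      have e₁c : ∀ r : Fin l, (r : ℕ) ≠ (j₀ : ℕ) → w₁ (Sum.inr r) = w (Sum.inr r) :=
        fun r h2 => T1_other m j₀ t₁ w (inr_ne_inl r m) (inr_ne_inr h2)
      have e₁m : w₁ (Sum.inr m) = 1 := by rw [e₁c m hmj, hw]
      set t₂ : k := -(w₁ (Sum.inl j₀)) with ht₂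
      set w₂ : (Fin l ⊕ Fin l) → k := T2 m j₀ t₂ *ᵥ w₁ with hw₂
      have hmj' : m ≠ j₀ := fin_ne_of_vne hmj
      have e₂a : w₂ (Sum.inl j₀) = 0 := by
        rw [hw₂, T2_at_inl' m j₀ t₂ w₁ hmj', e₁m, ht₂]
        ring
      have e₂b : ∀ r : Fin l, (r : ℕ) ≠ (m : ℕ) → (r : ℕ) ≠ (j₀ : ℕ) →
          w₂ (Sum.inl r) = w₁ (Sum.inl r) := fun r h1 h2 =>
        T2_other m j₀ t₂ w₁ (inl_ne_inl h1) (inl_ne_inl h2)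
      have e₂c : ∀ r : Fin l, w₂ (Sum.inr r) = w₁ (Sum.inr r) := fun r =>
        T2_other m j₀ t₂ w₁ (inr_ne_inl r m) (inr_ne_inl r j₀)
      have hw₂m : w₂ (Sum.inr m) = 1 := by rw [e₂c, e₁m]
      have hsupp₂ : ∀ j : Fin l, ((j : ℕ) < (m : ℕ) ∨ (m : ℕ) + 1 + d ≤ (j : ℕ)) →
          w₂ (Sum.inl j) = 0 ∧ w₂ (Sum.inr j) = 0 := by
        intro j hj
        rcases hj with hj | hj
        · refine ⟨?_, ?_⟩
          · rw [e₂b j (by omega) (by omega), e₁a j (by omega)]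
            exact (hsupp j (Or.inl hj)).1
          · rw [e₂c, e₁c j (by omega)]
            exact (hsupp j (Or.inl hj)).2
        · by_cases hjj : (j : ℕ) = (j₀ : ℕ)
          · have hjeq : j = j₀ := Fin.ext (by omega)
            rw [hjeq]
            exact ⟨e₂a, by rw [e₂c, e₁b]⟩
          · have hjbig : (m : ℕ) + 1 + (d + 1) ≤ (j : ℕ) := by omega
            refine ⟨?_, ?_⟩
            · rw [e₂b j (by omega) (by omega), e₁a j (by omega)]
              exact (hsupp j (Or.inr hjbig)).1
            · rw [e₂c, e₁c j (by omega)]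
              exact (hsupp j (Or.inr hjbig)).2
      obtain ⟨h, hInE, hFix, hFixm, hone, hzero⟩ := ih w₂ hw₂m hsupp₂
      have hcomp : (h * (T2 m j₀ t₂ * T1 m j₀ t₁)) *ᵥ w = h *ᵥ w₂ := by
        rw [← mulVec_mulVec, ← mulVec_mulVec]
      have fix1 : FixLow (m : ℕ) (T1 m j₀ t₁) := by
        intro i hi
        exact ⟨T1_fix m j₀ t₁ (inl_ne_inl (by omega)) (inl_ne_inr i m),
          T1_fix m j₀ t₁ (inr_ne_inl i j₀) (inr_ne_inr (by omega))⟩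
      have fix2 : FixLow (m : ℕ) (T2 m j₀ t₂) := by
        intro i hi
        exact ⟨T2_fix m j₀ t₂ (inl_ne_inr i j₀) (inl_ne_inr i m),
          T2_fix m j₀ t₂ (inr_ne_inr (by omega)) (inr_ne_inr (by omega))⟩
      have fixm1 : T1 m j₀ t₁ *ᵥ Pi.single (Sum.inl m) 1 = Pi.single (Sum.inl m) 1 :=
        T1_fix m j₀ t₁ (inl_ne_inl hmj) (inl_ne_inr m m)
      have fixm2 : T2 m j₀ t₂ *ᵥ Pi.single (Sum.inl m) 1 = Pi.single (Sum.inl m) 1 :=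
        T2_fix m j₀ t₂ (inl_ne_inr m j₀) (inl_ne_inr m m)
      refine ⟨h * (T2 m j₀ t₂ * T1 m j₀ t₁),
        InE_mul hInE (InE_mul (InE_elem (elem_T2 (by rw [Fin.lt_def]; omega) t₂))
          (InE_elem (elem_T1 hmj' t₁))),
        FixLow_mul hFix (FixLow_mul fix2 fix1), ?_, ?_, ?_⟩
      · rw [← mulVec_mulVec, ← mulVec_mulVec, fixm1, fixm2, hFixm]
      · rw [hcomp]; exact hone
      · intro j hj; rw [hcomp]; exact hzero j hj
    · apply ih w hw
      intro j hj
      rcases hj with hj | hj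
      · exact hsupp j (Or.inl hj)
      · exact absurd j.isLt (by omega)

lemma lemB (m : Fin l) (w : (Fin l ⊕ Fin l) → k) (hw : w (Sum.inr m) = 1)
    (hsupp : ∀ j : Fin l, (j : ℕ) < (m : ℕ) → w (Sum.inl j) = 0 ∧ w (Sum.inr j) = 0) :
    ∃ h : MM k l, InE h ∧ FixLow (m : ℕ) h ∧
      h *ᵥ Pi.single (Sum.inl m) 1 = Pi.single (Sum.inl m) 1 ∧
      h *ᵥ w = Pi.single (Sum.inr m) 1 := by
  obtain ⟨h₁, hInE, hFix, hFixm, hone, hzero⟩ := clearB m l w hw (fun j hj => by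
    rcases hj with hj | hj
    · exact hsupp j hj
    · exact absurd j.isLt (by omega))
  set w₁ : (Fin l ⊕ Fin l) → k := h₁ *ᵥ w with hw₁
  set c : k := -(w₁ (Sum.inl m)) with hc
  have hfinal : T4 m c *ᵥ w₁ = Pi.single (Sum.inr m) 1 := by
    funext r
    rcases r with j | j
    · by_cases hjm : j = m
      · subst hjm
        rw [T4_at j c w₁, hone, hc, Pi.single_eq_of_ne (inl_ne_inr j j)]
        ring
      · rw [T4_other m c w₁ (inl_ne_inl (fin_vne_of_ne hjm)),
          Pi.single_eq_of_ne (inl_ne_inr j m)]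
        exact (hzero j hjm).1
    · rw [T4_other m c w₁ (inr_ne_inl j m)]
      by_cases hjm : j = m
      · subst hjm; rw [hone, Pi.single_eq_same]
      · rw [Pi.single_eq_of_ne (inr_ne_inr (fin_vne_of_ne hjm))]
        exact (hzero j hjm).2
  have fix4 : FixLow (m : ℕ) (T4 m c) := fun i hi =>
    ⟨T4_fix m c (inl_ne_inr i m), T4_fix m c (inr_ne_inr (by omega))⟩
  refine ⟨T4 m c * h₁, InE_mul (InE_elem (elem_T4 m c)) hInE, FixLow_mul fix4 hFix, ?_, ?_⟩
  · rw [← mulVec_mulVec, hFixm, T4_fix m c (inl_ne_inr m m)]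
  · rw [← mulVec_mulVec, ← hw₁, hfinal]

lemma lemA (m : Fin l) (v : (Fin l ⊕ Fin l) → k) (hv0 : v ≠ 0)
    (hsupp : ∀ j : Fin l, (j : ℕ) < (m : ℕ) → v (Sum.inl j) = 0 ∧ v (Sum.inr j) = 0) :
    ∃ h : MM k l, InE h ∧ FixLow (m : ℕ) h ∧ h *ᵥ v = Pi.single (Sum.inl m) 1 := by
  -- Stage 0 : make the pivot nonzero
  obtain ⟨h₀, h₀InE, h₀Fix, h₀nz, h₀zero⟩ :
      ∃ h₀ : MM k l, InE h₀ ∧ FixLow (m : ℕ) h₀ ∧ (h₀ *ᵥ v) (Sum.inl m) ≠ 0 ∧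
        ∀ j : Fin l, (j : ℕ) < (m : ℕ) →
          (h₀ *ᵥ v) (Sum.inl j) = 0 ∧ (h₀ *ᵥ v) (Sum.inr j) = 0 := by
    by_cases h1 : v (Sum.inl m) ≠ 0
    · exact ⟨1, InE_one, FixLow_one _, by rw [one_mulVec]; exact h1,
        fun j hj => by rw [one_mulVec]; exact hsupp j hj⟩
    push_neg at h1
    by_cases h2 : v (Sum.inr m) ≠ 0
    · set t : k := (1 - v (Sum.inl m)) / v (Sum.inr m) with ht
      refine ⟨T4 m t, InE_elem (elem_T4 m t),
        fun i hi => ⟨T4_fix m t (inl_ne_inr i m), T4_fix m t (inr_ne_inr (by omega))⟩, ?_, ?_⟩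
      · rw [T4_at m t v, ht, div_mul_cancel₀ _ h2]
        intro hcon
        apply one_ne_zero (α := k)
        rw [← hcon]; ring
      · intro j hj
        rw [T4_other m t v (inl_ne_inl (by omega)), T4_other m t v (inr_ne_inl j m)]
        exact hsupp j hj
    push_neg at h2
    obtain ⟨r, hr⟩ : ∃ r, v r ≠ 0 := by
      by_contra hc
      push_neg at hc
      exact hv0 (funext hc)
    rcases r with j | j
    · have hjm : j ≠ m := by rintro rfl; exact hr h1
      have hjlow : ¬ (j : ℕ) < (m : ℕ) := fun hlow => hr (hsupp j hlow).1
      have hjv : (j : ℕ) ≠ (m : ℕ) := fin_vne_of_ne hjm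
      refine ⟨T1 m j 1, InE_elem (elem_T1 (Ne.symm hjm) 1),
        fun i hi => ⟨T1_fix m j 1 (inl_ne_inl (by omega)) (inl_ne_inr i m),
          T1_fix m j 1 (inr_ne_inl i j) (inr_ne_inr (by omega))⟩, ?_, ?_⟩
      · rw [T1_at_inl m j 1 v, h1]
        simpa using hr
      · intro j' hj'
        rw [T1_other m j 1 v (inl_ne_inl (by omega)) (inl_ne_inr j' j),
          T1_other m j 1 v (inr_ne_inl j' m) (inr_ne_inr (by omega))]
        exact hsupp j' hj'
    · have hjm : j ≠ m := by rintro rfl; exact hr h2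
      have hjlow : ¬ (j : ℕ) < (m : ℕ) := fun hlow => hr (hsupp j hlow).2
      have hjv : (j : ℕ) ≠ (m : ℕ) := fin_vne_of_ne hjm
      refine ⟨T2 m j 1, InE_elem (elem_T2 (by rw [Fin.lt_def]; omega) 1),
        fun i hi => ⟨T2_fix m j 1 (inl_ne_inr i j) (inl_ne_inr i m),
          T2_fix m j 1 (inr_ne_inr (by omega)) (inr_ne_inr (by omega))⟩, ?_, ?_⟩
      · rw [T2_at_inl m j 1 v (Ne.symm hjm), h1]
        simpa using hr
      · intro j' hj'
        rw [T2_other m j 1 v (inl_ne_inl (by omega)) (inl_ne_inl (by omega)),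
          T2_other m j 1 v (inr_ne_inl j' m) (inr_ne_inl j' j)]
        exact hsupp j' hj'
  -- Stage 1 : clear all other coordinates
  obtain ⟨h₁, h₁InE, h₁Fix, h₁nz, h₁zero⟩ := clearA m l (h₀ *ᵥ v) h₀nz (fun j hj => by
    rcases hj with hj | hj
    · exact h₀zero j hj
    · exact absurd j.isLt (by omega))
  set u : (Fin l ⊕ Fin l) → k := h₁ *ᵥ (h₀ *ᵥ v) with hu
  -- Stage 2 : normalize the pair (inl m, inr m)
  set t₂ : k := (1 - u (Sum.inr m)) / u (Sum.inl m) with ht₂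
  set u₂ : (Fin l ⊕ Fin l) → k := T5 m t₂ *ᵥ u with hu₂
  have e₂r : u₂ (Sum.inr m) = 1 := by
    rw [hu₂, T5_at m t₂ u, ht₂, div_mul_cancel₀ _ h₁nz]
    ring
  have e₂l : u₂ (Sum.inl m) = u (Sum.inl m) := T5_other m t₂ u (inl_ne_inr m m)
  set t₃ : k := 1 - u₂ (Sum.inl m) with ht₃
  set u₃ : (Fin l ⊕ Fin l) → k := T4 m t₃ *ᵥ u₂ with hu₃
  have e₃l : u₃ (Sum.inl m) = 1 := by
    rw [hu₃, T4_at m t₃ u₂, e₂r, ht₃]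
    ring
  have e₃r : u₃ (Sum.inr m) = 1 := by rw [hu₃, T4_other m t₃ u₂ (inr_ne_inl m m), e₂r]
  set u₄ : (Fin l ⊕ Fin l) → k := T5 m (-1) *ᵥ u₃ with hu₄
  have e₄r : u₄ (Sum.inr m) = 0 := by
    rw [hu₄, T5_at m (-1) u₃, e₃l, e₃r]
    ring
  have e₄l : u₄ (Sum.inl m) = 1 := by rw [hu₄, T5_other m (-1) u₃ (inl_ne_inr m m), e₃l]
  have hother : ∀ j : Fin l, j ≠ m → u₄ (Sum.inl j) = 0 ∧ u₄ (Sum.inr j) = 0 := by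
    intro j hj
    have hjv : (j : ℕ) ≠ (m : ℕ) := fin_vne_of_ne hj
    constructor
    · rw [hu₄, T5_other m (-1) u₃ (inl_ne_inr j m), hu₃,
        T4_other m t₃ u₂ (inl_ne_inl hjv), hu₂, T5_other m t₂ u (inl_ne_inr j m)]
      exact (h₁zero j hj).1
    · rw [hu₄, T5_other m (-1) u₃ (inr_ne_inr hjv), hu₃,
        T4_other m t₃ u₂ (inr_ne_inl j m), hu₂, T5_other m t₂ u (inr_ne_inr hjv)]
      exact (h₁zero j hj).2
  have hfinal : u₄ = Pi.single (Sum.inl m) 1 := by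
    funext r
    rcases r with j | j
    · by_cases hjm : j = m
      · subst hjm; rw [e₄l, Pi.single_eq_same]
      · rw [(hother j hjm).1, Pi.single_eq_of_ne (inl_ne_inl (fin_vne_of_ne hjm))]
    · by_cases hjm : j = m
      · subst hjm; rw [e₄r, Pi.single_eq_of_ne (inr_ne_inl j j)]
      · rw [(hother j hjm).2, Pi.single_eq_of_ne (inr_ne_inl j m)]
  have fix5a : FixLow (m : ℕ) (T5 m t₂) := fun i hi =>
    ⟨T5_fix m t₂ (inl_ne_inl (by omega)), T5_fix m t₂ (inr_ne_inl i m)⟩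
  have fix4 : FixLow (m : ℕ) (T4 m t₃) := fun i hi =>
    ⟨T4_fix m t₃ (inl_ne_inr i m), T4_fix m t₃ (inr_ne_inr (by omega))⟩
  have fix5b : FixLow (m : ℕ) (T5 m (-1 : k)) := fun i hi =>
    ⟨T5_fix m (-1 : k) (inl_ne_inl (by omega)), T5_fix m (-1 : k) (inr_ne_inl i m)⟩
  refine ⟨T5 m (-1 : k) * (T4 m t₃ * (T5 m t₂ * (h₁ * h₀))),
    InE_mul (InE_elem (elem_T5 m (-1 : k))) (InE_mul (InE_elem (elem_T4 m t₃))
      (InE_mul (InE_elem (elem_T5 m t₂)) (InE_mul h₁InE h₀InE))),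
    FixLow_mul fix5b (FixLow_mul fix4 (FixLow_mul fix5a (FixLow_mul h₁Fix h₀Fix))), ?_⟩
  rw [← mulVec_mulVec, ← mulVec_mulVec, ← mulVec_mulVec, ← mulVec_mulVec, ← hu, ← hu₂, ← hu₃, ← hu₄,
    hfinal]

lemma mulVec_single_col (A : MM k l) (q r : Fin l ⊕ Fin l) :
    (A *ᵥ Pi.single q 1) r = A r q := by
  simp [mulVec, dotProduct, Pi.single_apply, mul_ite]

lemma Jm_mulVec_inl (u : (Fin l ⊕ Fin l) → k) (a : Fin l) :
    (Jm k l *ᵥ u) (Sum.inl a) = u (Sum.inr a) := by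
  simp [Jm, mulVec, dotProduct, Fintype.sum_sum_type, one_apply, ite_mul]

lemma Jm_mulVec_inr (u : (Fin l ⊕ Fin l) → k) (a : Fin l) :
    (Jm k l *ᵥ u) (Sum.inr a) = -(u (Sum.inl a)) := by
  simp [Jm, mulVec, dotProduct, Fintype.sum_sum_type, one_apply, ite_mul]

lemma Jm_ll (a b : Fin l) : Jm k l (Sum.inl a) (Sum.inl b) = 0 := by simp [Jm]
lemma Jm_rr (a b : Fin l) : Jm k l (Sum.inr a) (Sum.inr b) = 0 := by simp [Jm]
lemma Jm_lr_same (a : Fin l) : Jm k l (Sum.inl a) (Sum.inr a) = 1 := by simp [Jm]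
lemma Jm_lr_ne {a b : Fin l} (h : a ≠ b) : Jm k l (Sum.inl a) (Sum.inr b) = 0 := by
  simp [Jm, Matrix.one_apply, h]
lemma Jm_rl_ne {a b : Fin l} (h : a ≠ b) : Jm k l (Sum.inr a) (Sum.inl b) = 0 := by
  simp [Jm, Matrix.one_apply, h]

lemma pair_col {g : MM k l} (hg : Symp g) {p₀ : Fin l ⊕ Fin l} (p q : Fin l ⊕ Fin l)
    (hp : g *ᵥ Pi.single p 1 = Pi.single p₀ 1) :
    (Jm k l *ᵥ (g *ᵥ Pi.single q 1)) p₀ = Jm k l p q := by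
  have h1 : gᵀ *ᵥ (Jm k l *ᵥ (g *ᵥ Pi.single q 1)) = Jm k l *ᵥ Pi.single q 1 := by
    rw [mulVec_mulVec, mulVec_mulVec, hg]
  have h2 := congrFun h1 p
  rw [mulVec_single_col (Jm k l) q p] at h2
  set w : (Fin l ⊕ Fin l) → k := Jm k l *ᵥ (g *ᵥ Pi.single q 1) with hwdef
  have hcol : ∀ r, g r p = (Pi.single p₀ 1 : (Fin l ⊕ Fin l) → k) r := fun r => by
    have hc := congrFun hp r
    rw [mulVec_single_col] at hc
    exact hc
  have h3 : (gᵀ *ᵥ w) p = w p₀ := by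
    have hterm : ∀ r, gᵀ p r * w r = (if r = p₀ then w r else 0) := by
      intro r
      rw [transpose_apply, hcol r, Pi.single_apply]
      split_ifs with h
      · rw [one_mul]
      · rw [zero_mul]
    calc (gᵀ *ᵥ w) p = ∑ r, gᵀ p r * w r := by simp [mulVec, dotProduct]
      _ = ∑ r, (if r = p₀ then w r else 0) := Finset.sum_congr rfl (fun r _ => hterm r)
      _ = w p₀ := by rw [Finset.sum_ite_eq' Finset.univ p₀ w]; simp
  rw [← h3]
  exact h2

def FixPair (g : MM k l) (i : Fin l) : Prop :=
  g *ᵥ Pi.single (Sum.inl i) 1 = Pi.single (Sum.inl i) 1 ∧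
  g *ᵥ Pi.single (Sum.inr i) 1 = Pi.single (Sum.inr i) 1

lemma main_aux : ∀ (d : ℕ) (g : MM k l), Symp g →
    (∀ i : Fin l, (i : ℕ) + d < l → FixPair g i) → InE g := by
  intro d
  induction d with
  | zero =>
    intro g _ hfix
    have hg1 : g = 1 := by
      ext r c
      rcases c with i | i
      · have hcc := congrFun (hfix i (by have := i.isLt; omega)).1 r
        rw [mulVec_single_col] at hcc
        rw [hcc, Pi.single_apply, Matrix.one_apply]
      · have hcc := congrFun (hfix i (by have := i.isLt; omega)).2 r
        rw [mulVec_single_col] at hcc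
        rw [hcc, Pi.single_apply, Matrix.one_apply]
    rw [hg1]; exact InE_one
  | succ d ih =>
    intro g hg hfix
    by_cases hdl : l ≤ d
    · exact ih g hg (fun i hi => absurd hi (by omega))
    · set m : Fin l := ⟨l - d - 1, by omega⟩ with hm
      have hmv : (m : ℕ) = l - d - 1 := rfl
      set v : (Fin l ⊕ Fin l) → k := g *ᵥ Pi.single (Sum.inl m) 1 with hv
      have hv0 : v ≠ 0 := by
        intro h0
        have h1 : gᵀ *ᵥ (Jm k l *ᵥ (g *ᵥ Pi.single (Sum.inl m) 1))
            = Jm k l *ᵥ Pi.single (Sum.inl m) 1 := by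
          rw [mulVec_mulVec, mulVec_mulVec, hg]
        rw [← hv, h0, mulVec_zero, mulVec_zero] at h1
        have h2 := congrFun h1 (Sum.inr m)
        rw [Pi.zero_apply, Jm_mulVec_inr, Pi.single_eq_same] at h2
        exact one_ne_zero (α := k) (neg_eq_zero.mp h2.symm)
      have hsuppv : ∀ j : Fin l, (j : ℕ) < (m : ℕ) → v (Sum.inl j) = 0 ∧ v (Sum.inr j) = 0 := by
        intro j hj
        have hfp := hfix j (by omega)
        have hjm : j ≠ m := fin_ne_of_vne (by omega)
        constructor
        · have hp := pair_col hg (Sum.inr j) (Sum.inl m) hfp.2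
          rw [Jm_mulVec_inr, ← hv, Jm_rl_ne hjm] at hp
          exact neg_eq_zero.mp hp
        · have hp := pair_col hg (Sum.inl j) (Sum.inl m) hfp.1
          rw [Jm_mulVec_inl, ← hv, Jm_ll] at hp
          exact hp
      obtain ⟨hA, hAInE, hAFix, hAv⟩ := lemA m v hv0 hsuppv
      set g₁ : MM k l := hA * g with hg₁def
      have hg₁ : Symp g₁ := symp_mul (InE_symp hAInE) hg
      have col1 : g₁ *ᵥ Pi.single (Sum.inl m) 1 = Pi.single (Sum.inl m) 1 := by
        rw [hg₁def, ← mulVec_mulVec, ← hv, hAv]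
      have fix₁ : ∀ i : Fin l, (i : ℕ) < (m : ℕ) → FixPair g₁ i := by
        intro i hi
        have hfp := hfix i (by omega)
        exact ⟨by rw [hg₁def, ← mulVec_mulVec, hfp.1]; exact (hAFix i hi).1,
               by rw [hg₁def, ← mulVec_mulVec, hfp.2]; exact (hAFix i hi).2⟩
      set w : (Fin l ⊕ Fin l) → k := g₁ *ᵥ Pi.single (Sum.inr m) 1 with hw
      have hw1 : w (Sum.inr m) = 1 := by
        have hp := pair_col hg₁ (Sum.inl m) (Sum.inr m) col1
        rw [Jm_mulVec_inl, ← hw, Jm_lr_same] at hp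
        exact hp
      have hsuppw : ∀ j : Fin l, (j : ℕ) < (m : ℕ) → w (Sum.inl j) = 0 ∧ w (Sum.inr j) = 0 := by
        intro j hj
        have hfp := fix₁ j hj
        have hjm : j ≠ m := fin_ne_of_vne (by omega)
        constructor
        · have hp := pair_col hg₁ (Sum.inr j) (Sum.inr m) hfp.2
          rw [Jm_mulVec_inr, ← hw, Jm_rr] at hp
          exact neg_eq_zero.mp hp
        · have hp := pair_col hg₁ (Sum.inl j) (Sum.inr m) hfp.1
          rw [Jm_mulVec_inl, ← hw, Jm_lr_ne hjm] at hp
          exact hp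
      obtain ⟨hB, hBInE, hBFix, hBfixm, hBw⟩ := lemB m w hw1 hsuppw
      set g₂ : MM k l := hB * g₁ with hg₂def
      have hfix₂ : ∀ i : Fin l, (i : ℕ) + d < l → FixPair g₂ i := by
        intro i hi
        by_cases him : (i : ℕ) < (m : ℕ)
        · have hfp := fix₁ i him
          exact ⟨by rw [hg₂def, ← mulVec_mulVec, hfp.1]; exact (hBFix i him).1,
                 by rw [hg₂def, ← mulVec_mulVec, hfp.2]; exact (hBFix i him).2⟩
        · have hieq : i = m := Fin.ext (by omega)
          rw [hieq]
          exact ⟨by rw [hg₂def, ← mulVec_mulVec, col1]; exact hBfixm,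
                 by rw [hg₂def, ← mulVec_mulVec, ← hw]; exact hBw⟩
      have hInE₂ : InE g₂ := ih g₂ (symp_mul (InE_symp hBInE) hg₁) hfix₂
      obtain ⟨hA', hA'InE, hA'l, _⟩ := InE_inv hAInE
      obtain ⟨hB', hB'InE, hB'l, _⟩ := InE_inv hBInE
      have hgeq : g = hA' * (hB' * g₂) := by
        rw [hg₂def, hg₁def]
        symm
        calc hA' * (hB' * (hB * (hA * g))) = hA' * ((hB' * hB) * (hA * g)) := by
              rw [mul_assoc]
          _ = hA' * (hA * g) := by rw [hB'l, one_mul]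
          _ = (hA' * hA) * g := by rw [mul_assoc]
          _ = g := by rw [hA'l, one_mul]
      rw [hgeq]
      exact InE_mul hA'InE (InE_mul hB'InE hInE₂)


end SpGen14

/-- For l ≥ 2, every element of Sp(2l,k) is a finite product of elementary
symplectic matrices. -/
theorem stmt14 (k : Type*) [Field k] (l : ℕ) (hl : 2 ≤ l)
    (g : Matrix (Fin l ⊕ Fin l) (Fin l ⊕ Fin l) k)
    (hg : gᵀ * fromBlocks 0 1 (-1) 0 * g = fromBlocks 0 1 (-1) 0) :
    ∃ L : List (Matrix (Fin l ⊕ Fin l) (Fin l ⊕ Fin l) k),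
      (∀ x ∈ L, IsElementarySymplectic k l x) ∧ L.prod = g := by
  have hg' : SpGen14.Symp g := by unfold SpGen14.Symp SpGen14.Jm; exact hg
  obtain ⟨L, hL, hprod⟩ := SpGen14.main_aux l g hg' (fun i hi => absurd hi (by omega))
  exact ⟨L, hL, hprod⟩
end

section
/- Let k be a field of characteristic ≠ 2 and g a unipotent element of O(d,k) (split form). Then the spinor norm Θ(g) is trivial, i.e., Θ(g) = 1̄ in k×/(k×)². -/
open Matrix

open Polynomial in
/-- Newton iteration: a polynomial square root of `X` modulo `(X-1)^(n+1)`. -/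
lemma sqrtPoly_aux (k : Type*) [Field k] (h2 : (2 : k) ≠ 0) (n : ℕ) :
    ∃ p : k[X], (X - 1 ∣ p - 1) ∧ (X - 1) ^ (n + 1) ∣ p ^ 2 - X := by
  have c2 : (C (2:k)) * C 2⁻¹ = 1 := by rw [← C_mul, mul_inv_cancel₀ h2, C_1]
  have c2' : (2 : k[X]) * C 2⁻¹ = 1 := by
    have h22 : (C (2:k)) = (2 : k[X]) := map_ofNat C 2
    rw [← h22]; exact c2
  induction n with
  | zero =>
    refine ⟨C 2⁻¹ * (X + 1), ⟨C 2⁻¹, ?_⟩, ⟨C 2⁻¹ * C 2⁻¹ * (X - 1), ?_⟩⟩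
    · linear_combination c2'
    · linear_combination (X * (2 * C 2⁻¹ + 1)) * c2'
  | succ n ih =>
    obtain ⟨p, ⟨r, hr⟩, ⟨s, hs⟩⟩ := ih
    refine ⟨p - C 2⁻¹ * (p ^ 2 - X), ⟨r - C 2⁻¹ * (X - 1) ^ n * s, ?_⟩, 
      ⟨s * (-r + C 2⁻¹ * C 2⁻¹ * (X - 1) ^ n * s), ?_⟩⟩
    · calc p - C 2⁻¹ * (p ^ 2 - X) - 1
          = (p - 1) - C 2⁻¹ * (p ^ 2 - X) := by ring
        _ = (X - 1) * r - C 2⁻¹ * ((X - 1) ^ (n + 1) * s) := by rw [← hr, ← hs]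
        _ = (X - 1) * (r - C 2⁻¹ * (X - 1) ^ n * s) := by ring
    · have expand : (p - C 2⁻¹ * (p ^ 2 - X)) ^ 2 - X
          = (p ^ 2 - X) * (1 - p + C 2⁻¹ * C 2⁻¹ * (p ^ 2 - X)) := by
        linear_combination (-(p * (p ^ 2 - X))) * c2'
      rw [expand, hs]
      calc (X - 1) ^ (n + 1) * s * (1 - p + C 2⁻¹ * C 2⁻¹ * ((X - 1) ^ (n + 1) * s))
          = (X - 1) ^ (n + 1) * s
              * (-( (X - 1) * r) + C 2⁻¹ * C 2⁻¹ * ((X - 1) ^ (n + 1) * s)) := by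
            rw [show (1 : k[X]) - p = -((X - 1) * r) from by linear_combination -hr]
        _ = (X - 1) ^ (n + 1 + 1) * (s * (-r + C 2⁻¹ * C 2⁻¹ * (X - 1) ^ n * s)) := by
            ring

open Polynomial in
lemma commute_aeval_helper {k A : Type*} [CommSemiring k] [Ring A] [Algebra k A]
    {a b : A} (h : Commute a b) (q : k[X]) : Commute (aeval a q) b := by
  rw [aeval_eq_sum_range]
  exact Commute.sum_left _ _ _ fun i _ => ((h.pow_left i).smul_left _)

open Polynomial in
lemma aeval_transpose_helper {k : Type*} [CommRing k] {d : ℕ}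
    (M : Matrix (Fin d) (Fin d) k) (q : k[X]) :
    (aeval M q)ᵀ = aeval Mᵀ q := by
  rw [aeval_eq_sum_range, aeval_eq_sum_range, Matrix.transpose_sum]
  refine Finset.sum_congr rfl fun i _ => ?_
  rw [Matrix.transpose_smul, Matrix.transpose_pow]

open Polynomial in
lemma aeval_unit_conj_helper {k A : Type*} [CommSemiring k] [Ring A] [Algebra k A]
    (u : Aˣ) (a : A) (q : k[X]) :
    aeval ((u : A) * a * (↑u⁻¹ : A)) q = (u : A) * aeval a q * (↑u⁻¹ : A) := by
  rw [aeval_eq_sum_range, aeval_eq_sum_range, Finset.mul_sum, Finset.sum_mul]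
  refine Finset.sum_congr rfl fun i _ => ?_
  rw [Units.conj_pow, mul_smul_comm, smul_mul_assoc]

/-- The spinor norm (the homomorphism Θ : O(d,k) → k×/(k×)² with Θ(ρ_v) = Q(v)
mod squares for reflections) is trivial on unipotent elements. -/
theorem stmt18 (k : Type*) [Field k] (hchar : (2 : k) ≠ 0) (d : ℕ)
    (β : Matrix (Fin d) (Fin d) k) (hβsymm : βᵀ = β) (hβinv : IsUnit β)
    (Q : (Fin d → k) → k) (hQ : ∀ v, Q v = (v ⬝ᵥ β.mulVec v) / 2)
    (ρ : (Fin d → k) → Matrix (Fin d) (Fin d) k)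
    (hρ : ∀ v, ρ v = 1 - (Q v)⁻¹ • vecMulVec v (β.mulVec v))
    (Θ : Matrix (Fin d) (Fin d) k → kˣ ⧸ Subgroup.closure {x : kˣ | IsSquare x})
    (hΘmul : ∀ a b, aᵀ * β * a = β → bᵀ * β * b = β → Θ (a * b) = Θ a * Θ b)
    (hΘρ : ∀ v (hv : Q v ≠ 0), Θ (ρ v) = QuotientGroup.mk (Units.mk0 (Q v) hv))
    (g : Matrix (Fin d) (Fin d) k)
    (hgO : gᵀ * β * g = β) (hgu : IsNilpotent (g - 1)) :
    Θ g = 1 := by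
  classical
  open Polynomial in
  obtain ⟨m, hm⟩ := hgu
  obtain ⟨p, ⟨r, hr⟩, ⟨s, hs⟩⟩ := sqrtPoly_aux k hchar m
  have hgu' : IsNilpotent (g - 1) := ⟨m, hm⟩
  have hNpow : (g - 1) ^ (m + 1) = 0 := by rw [pow_succ, hm, zero_mul]
  have hgU : IsUnit g := by
    have := hgu'.isUnit_one_add
    simpa using this
  set u : (Matrix (Fin d) (Fin d) k)ˣ := hgU.unit with hu_def
  have hu : (u : Matrix (Fin d) (Fin d) k) = g := hgU.unit_spec
  set v : Matrix (Fin d) (Fin d) k := (↑u⁻¹ : Matrix (Fin d) (Fin d) k) with hv_def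
  have hgv : g * v = 1 := by rw [hv_def, ← hu]; exact u.mul_inv
  have hvg : v * g = 1 := by rw [hv_def, ← hu]; exact u.inv_mul
  have hcgv : Commute g v := by unfold Commute SemiconjBy; rw [hgv, hvg]
  set b : (Matrix (Fin d) (Fin d) k)ˣ := hβinv.unit with hb_def
  have hb : (b : Matrix (Fin d) (Fin d) k) = β := hβinv.unit_spec
  -- nilpotency of v - 1
  have hcvN : Commute v (g - 1) := (hcgv.symm).sub_right (Commute.one_right v)
  have hvNpow : (v - 1) ^ (m + 1) = 0 := by
    have hvsub : v - 1 = -(v * (g - 1)) := by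
      have h1 : v * (g - 1) = v * g - v := by rw [mul_sub, mul_one]
      rw [h1, hvg, neg_sub]
    rw [hvsub, neg_pow, hcvN.mul_pow, hNpow, mul_zero, mul_zero]
  have hvu' : IsNilpotent (v - 1) := ⟨m + 1, hvNpow⟩
  -- square roots
  set A : Matrix (Fin d) (Fin d) k := aeval g p with hA_def
  set B : Matrix (Fin d) (Fin d) k := aeval v p with hB_def
  have haevalsq : ∀ x : Matrix (Fin d) (Fin d) k,
      (x - 1) ^ (m + 1) = 0 → (aeval x p) ^ 2 = x := by
    intro x hx
    have h1 : (aeval x p) ^ 2 - x = aeval x (p ^ 2 - X) := by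
      rw [map_sub, map_pow, aeval_X]
    have h2 : aeval x (p ^ 2 - X) = 0 := by
      rw [hs, _root_.map_mul, map_pow, map_sub, aeval_X, aeval_one, hx, zero_mul]
    exact sub_eq_zero.mp (h1.trans h2)
  have hA2 : A ^ 2 = g := haevalsq g hNpow
  have hB2 : B ^ 2 = v := haevalsq v hvNpow
  -- nilpotency of A - 1 and B - 1
  have haevalnil : ∀ x : Matrix (Fin d) (Fin d) k,
      (x - 1) ^ (m + 1) = 0 → IsNilpotent (aeval x p - 1) := by
    intro x hx
    have h1 : aeval x p - 1 = (x - 1) * aeval x r := by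
      have : aeval x p - 1 = aeval x (p - 1) := by rw [map_sub, aeval_one]
      rw [this, hr, _root_.map_mul, map_sub, aeval_X, aeval_one]
    rw [h1]
    have hcx : Commute x (x - 1) := (Commute.refl x).sub_right (Commute.one_right x)
    have hc : Commute (x - 1) (aeval x r) := (commute_aeval_helper hcx r).symm
    exact hc.isNilpotent_mul_right ⟨m + 1, hx⟩
  have hAnil : IsNilpotent (A - 1) := haevalnil g hNpow
  have hBnil : IsNilpotent (B - 1) := haevalnil v hvNpow
  -- A and B commute
  have hAv : Commute A v := commute_aeval_helper hcgv p
  have hAB : Commute A B := (commute_aeval_helper hAv.symm p).symm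
  -- w := B * A satisfies w² = 1 and w unipotent, hence w = 1
  set w : Matrix (Fin d) (Fin d) k := B * A with hw_def
  have hw2 : w ^ 2 = 1 := by
    rw [hw_def, (hAB.symm).mul_pow, hB2, hA2, hvg]
  have hwnil : IsNilpotent (w - 1) := by
    have hcBA : Commute (B - 1) (A - 1) :=
      ((hAB.symm).sub_left (Commute.one_left A)).sub_right (Commute.one_right (B - 1))
    have h1 : IsNilpotent ((B - 1) * (A - 1)) := hcBA.isNilpotent_mul_right hBnil
    have hc1 : Commute ((B - 1) * (A - 1)) (B - 1) :=
      Commute.mul_left (Commute.refl (B - 1)) hcBA.symm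
    have h2 : IsNilpotent ((B - 1) * (A - 1) + (B - 1)) :=
      hc1.isNilpotent_add h1 hBnil
    have hc2 : Commute ((B - 1) * (A - 1) + (B - 1)) (A - 1) :=
      Commute.add_left (Commute.mul_left hcBA (Commute.refl (A - 1))) hcBA
    have h3 : IsNilpotent ((B - 1) * (A - 1) + (B - 1) + (A - 1)) :=
      hc2.isNilpotent_add h2 hAnil
    have : w - 1 = (B - 1) * (A - 1) + (B - 1) + (A - 1) := by
      rw [hw_def]; noncomm_ring
    rwa [this]
  have hw1 : w = 1 := by
    have h0 : (w - 1) * (w + 1) = 0 := by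
      have : (w - 1) * (w + 1) = w ^ 2 - 1 := by noncomm_ring
      rw [this, hw2, sub_self]
    have h2u : IsUnit (2 : Matrix (Fin d) (Fin d) k) := by
      have h := (isUnit_iff_ne_zero.mpr hchar).map (algebraMap k (Matrix (Fin d) (Fin d) k))
      rwa [map_ofNat] at h
    have hcom : Commute (w - 1) (2 : Matrix (Fin d) (Fin d) k) := by
      have : (2 : Matrix (Fin d) (Fin d) k) = 1 + 1 := one_add_one_eq_two.symm
      rw [this]
      exact (Commute.one_right _).add_right (Commute.one_right _)
    have hWu : IsUnit (w + 1) := by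
      have := hwnil.isUnit_add_right_of_commute h2u hcom
      have he : w - 1 + 2 = w + 1 := by
        rw [sub_eq_add_neg, add_assoc]; norm_num
      rwa [he] at this
    have h0' : (w + 1) * (w - 1) = 0 := by
      rw [show (w + 1) * (w - 1) = (w - 1) * (w + 1) from by noncomm_ring]
      exact h0
    exact sub_eq_zero.mp ((hWu.mul_right_eq_zero).mp h0')
  -- A is orthogonal
  have hgT : gᵀ = (b : Matrix (Fin d) (Fin d) k) * v * (↑b⁻¹ : Matrix (Fin d) (Fin d) k) := by
    have e1 : gᵀ * β = β * v := by
      calc gᵀ * β = gᵀ * β * (g * v) := by rw [hgv, mul_one]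
        _ = gᵀ * β * g * v := by rw [mul_assoc (gᵀ * β)]
        _ = β * v := by rw [hgO]
    have e2 : β * (↑b⁻¹ : Matrix (Fin d) (Fin d) k) = 1 := by rw [← hb]; exact b.mul_inv
    calc gᵀ = gᵀ * (β * (↑b⁻¹ : Matrix (Fin d) (Fin d) k)) := by rw [e2, mul_one]
      _ = gᵀ * β * (↑b⁻¹ : Matrix (Fin d) (Fin d) k) := by rw [mul_assoc]
      _ = β * v * (↑b⁻¹ : Matrix (Fin d) (Fin d) k) := by rw [e1]
      _ = (b : Matrix (Fin d) (Fin d) k) * v * (↑b⁻¹ : Matrix (Fin d) (Fin d) k) := by rw [hb]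
  have hAT : Aᵀ = (b : Matrix (Fin d) (Fin d) k) * B * (↑b⁻¹ : Matrix (Fin d) (Fin d) k) := by
    rw [hA_def, aeval_transpose_helper, hgT, aeval_unit_conj_helper, ← hB_def]
  have hAorth : Aᵀ * β * A = β := by
    have e3 : (↑b⁻¹ : Matrix (Fin d) (Fin d) k) * β = 1 := by rw [← hb]; exact b.inv_mul
    calc Aᵀ * β * A
        = (b : Matrix (Fin d) (Fin d) k) * B * ((↑b⁻¹ : Matrix (Fin d) (Fin d) k) * β) * A := by
          rw [hAT, mul_assoc ((b : Matrix (Fin d) (Fin d) k) * B)]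
      _ = (b : Matrix (Fin d) (Fin d) k) * B * A := by rw [e3, mul_one]
      _ = (b : Matrix (Fin d) (Fin d) k) * (B * A) := by rw [mul_assoc]
      _ = β := by rw [← hw_def, hw1, mul_one, hb]
  -- conclude
  have hgAA : g = A * A := by rw [← hA2, sq]
  rw [hgAA, hΘmul A A hAorth hAorth]
  obtain ⟨x, hx⟩ := QuotientGroup.mk_surjective (Θ A)
  rw [← hx]
  have : (QuotientGroup.mk x : kˣ ⧸ Subgroup.closure {x : kˣ | IsSquare x})
      * QuotientGroup.mk x = QuotientGroup.mk (x * x) := rfl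
  rw [this]
  exact (QuotientGroup.eq_one_iff _).mpr (Subgroup.subset_closure ⟨x, rfl⟩)
end

section
/- Let k be a field and P ≤ Sp(2l,k) the Siegel maximal parabolic subgroup of block upper-triangular symplectic matrices [[A,B],[0,D]]. Define ω_i = w_{1,−1}···w_{i,−i} for 1 ≤ i ≤ l and ω_0 = I, where w_{j,−j} = I + e_{j,−j} − e_{−j,j} − e_{j,j} − e_{−j,−j}. Then Sp(2l,k) is the disjoint union of the double cosets P ω_i P for 0 ≤ i ≤ l; in particular |P\Sp(2l,k)/P| = l + 1. -/
open Matrix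

namespace Stmt19Aux
variable {k : Type*} [Field k] {l : ℕ}

noncomputable def Jd (k : Type*) [Field k] (l r : ℕ) : Matrix (Fin l) (Fin l) k :=
  diagonal fun j => if (j : ℕ) < r then 1 else 0

lemma Jd_transpose (r : ℕ) : (Jd k l r)ᵀ = Jd k l r := diagonal_transpose _

lemma Jd_mul_Jd (r : ℕ) : Jd k l r * Jd k l r = Jd k l r := by
  rw [Jd, diagonal_mul_diagonal]
  refine congrArg diagonal (funext fun j => ?_)
  by_cases h : (j:ℕ) < r <;> simp [h]

noncomputable def Mw (k : Type*) [Field k] (l r : ℕ) :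
    Matrix (Fin l ⊕ Fin l) (Fin l ⊕ Fin l) k :=
  fromBlocks (1 - Jd k l r) (Jd k l r) (-(Jd k l r)) (1 - Jd k l r)

lemma Mw_mul_transpose (r : ℕ) : Mw k l r * (Mw k l r)ᵀ = 1 := by
  have hJ := Jd_mul_Jd (k := k) (l := l) r
  set J := Jd k l r with hJdef
  have e1 : (1 - J) * (1 - J) + J * J = (1 : Matrix (Fin l) (Fin l) k) := by
    simp only [sub_mul, mul_sub, one_mul, mul_one, hJ]; abel
  have e2 : (1 - J) * (-J) + J * (1 - J) = (0 : Matrix (Fin l) (Fin l) k) := by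
    simp only [mul_neg, mul_sub, sub_mul, mul_one, one_mul, hJ]; abel
  have e3 : -J * (1 - J) + (1 - J) * J = (0 : Matrix (Fin l) (Fin l) k) := by
    simp only [neg_mul, mul_sub, sub_mul, mul_one, one_mul, hJ]; abel
  have e4 : -J * (-J) + (1 - J) * (1 - J) = (1 : Matrix (Fin l) (Fin l) k) := by
    simp only [neg_mul, mul_neg, neg_neg, mul_sub, sub_mul, mul_one, one_mul, hJ]; abel
  rw [Mw, fromBlocks_transpose, transpose_neg, transpose_sub, transpose_one, Jd_transpose,
    ← hJdef, fromBlocks_multiply, e1, e2, e3, e4, fromBlocks_one]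

lemma symp_mul {m n : Matrix (Fin l ⊕ Fin l) (Fin l ⊕ Fin l) k}
    (hm : mᵀ * fromBlocks 0 1 (-1) 0 * m = fromBlocks 0 1 (-1) 0)
    (hn : nᵀ * fromBlocks 0 1 (-1) 0 * n = fromBlocks 0 1 (-1) 0) :
    (m * n)ᵀ * fromBlocks 0 1 (-1) 0 * (m * n) = fromBlocks 0 1 (-1) 0 := by
  rw [transpose_mul]
  calc nᵀ * mᵀ * fromBlocks 0 1 (-1) 0 * (m * n)
      = nᵀ * (mᵀ * fromBlocks 0 1 (-1) 0 * m) * n := by noncomm_ring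
    _ = fromBlocks 0 1 (-1) 0 := by rw [hm]; exact hn

lemma JJ_mul_JJ : (fromBlocks 0 1 (-1) 0 : Matrix (Fin l ⊕ Fin l) (Fin l ⊕ Fin l) k) *
    fromBlocks 0 1 (-1) 0 = -1 := by
  rw [fromBlocks_multiply]
  simp [← fromBlocks_one, fromBlocks_neg]

lemma symp_left_inv {m : Matrix (Fin l ⊕ Fin l) (Fin l ⊕ Fin l) k}
    (hm : mᵀ * fromBlocks 0 1 (-1) 0 * m = fromBlocks 0 1 (-1) 0) :
    (-(fromBlocks 0 1 (-1) 0) * mᵀ * fromBlocks 0 1 (-1) 0) * m = 1 := by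
  calc (-(fromBlocks 0 1 (-1) 0) * mᵀ * fromBlocks 0 1 (-1) 0) * m
      = -(fromBlocks 0 1 (-1) 0) * (mᵀ * fromBlocks 0 1 (-1) 0 * m) := by noncomm_ring
    _ = -(fromBlocks 0 1 (-1) 0 * fromBlocks 0 1 (-1) 0) := by rw [hm]; noncomm_ring
    _ = 1 := by rw [JJ_mul_JJ]; simp

lemma symp_right_inv {m : Matrix (Fin l ⊕ Fin l) (Fin l ⊕ Fin l) k}
    (hm : mᵀ * fromBlocks 0 1 (-1) 0 * m = fromBlocks 0 1 (-1) 0) :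
    m * (-(fromBlocks 0 1 (-1) 0) * mᵀ * fromBlocks 0 1 (-1) 0) = 1 :=
  mul_eq_one_comm.mp (symp_left_inv hm)

lemma symp_transpose {m : Matrix (Fin l ⊕ Fin l) (Fin l ⊕ Fin l) k}
    (hm : mᵀ * fromBlocks 0 1 (-1) 0 * m = fromBlocks 0 1 (-1) 0) :
    (mᵀ)ᵀ * fromBlocks 0 1 (-1) 0 * mᵀ = fromBlocks 0 1 (-1) 0 := by
  have h := symp_right_inv hm
  have h2 : m * (fromBlocks 0 1 (-1) 0) * mᵀ * (fromBlocks 0 1 (-1) 0) = -1 := by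
    calc m * (fromBlocks 0 1 (-1) 0) * mᵀ * (fromBlocks 0 1 (-1) 0)
        = -(m * (-(fromBlocks 0 1 (-1) 0) * mᵀ * fromBlocks 0 1 (-1) 0)) := by noncomm_ring
      _ = -1 := by rw [h]
  have hJJ' : (fromBlocks 0 1 (-1) 0 : Matrix (Fin l ⊕ Fin l) (Fin l ⊕ Fin l) k) *
      -(fromBlocks 0 1 (-1) 0) = 1 := by rw [mul_neg, JJ_mul_JJ]; simp
  rw [transpose_transpose]
  calc m * fromBlocks 0 1 (-1) 0 * mᵀ
      = m * fromBlocks 0 1 (-1) 0 * mᵀ *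
        (fromBlocks 0 1 (-1) 0 * -(fromBlocks 0 1 (-1) 0)) := by rw [hJJ', mul_one]
    _ = (m * fromBlocks 0 1 (-1) 0 * mᵀ * fromBlocks 0 1 (-1) 0) * -(fromBlocks 0 1 (-1) 0) := by
        simp only [mul_assoc]
    _ = -1 * -(fromBlocks 0 1 (-1) 0) := by rw [h2]
    _ = fromBlocks 0 1 (-1) 0 := by simp

/-- the symplectic inverse in block form -/
lemma symp_inv_blocks (A B C D : Matrix (Fin l) (Fin l) k) :
    -(fromBlocks 0 1 (-1) 0) * (fromBlocks A B C D)ᵀ * fromBlocks 0 1 (-1) 0 =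
      fromBlocks Dᵀ (-Bᵀ) (-Cᵀ) Aᵀ := by
  rw [fromBlocks_transpose, show -(fromBlocks 0 1 (-1) 0 : Matrix (Fin l ⊕ Fin l)
      (Fin l ⊕ Fin l) k) = fromBlocks 0 (-1) 1 0 by rw [fromBlocks_neg]; norm_num,
    fromBlocks_multiply, fromBlocks_multiply]
  simp

/-- Mw is symplectic -/
lemma symp_Mw (r : ℕ) : (Mw k l r)ᵀ * fromBlocks 0 1 (-1) 0 * Mw k l r =
    fromBlocks 0 1 (-1) 0 := by
  have hJ := Jd_mul_Jd (k := k) (l := l) r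
  set J := Jd k l r with hJdef
  have hJMw : (fromBlocks 0 1 (-1) 0 : Matrix (Fin l ⊕ Fin l) (Fin l ⊕ Fin l) k) * Mw k l r =
      fromBlocks (-J) (1 - J) (-(1 - J)) (-J) := by
    rw [Mw, fromBlocks_multiply, ← hJdef]
    simp
  rw [mul_assoc, hJMw, Mw, fromBlocks_transpose, transpose_neg, transpose_sub, transpose_one,
    Jd_transpose, ← hJdef, fromBlocks_multiply]
  have e1 : (1 - J) * -J + -J * -(1 - J) = (0 : Matrix (Fin l) (Fin l) k) := by
    simp only [mul_neg, neg_mul, neg_neg, sub_mul, mul_sub, mul_one, one_mul, hJ]; abel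
  have e2 : (1 - J) * (1 - J) + -J * -J = (1 : Matrix (Fin l) (Fin l) k) := by
    simp only [neg_mul, mul_neg, neg_neg, sub_mul, mul_sub, mul_one, one_mul, hJ]; abel
  have e3 : J * -J + (1 - J) * -(1 - J) = (-1 : Matrix (Fin l) (Fin l) k) := by
    simp only [mul_neg, sub_mul, mul_sub, mul_one, one_mul, hJ]; abel
  have e4 : J * (1 - J) + (1 - J) * -J = (0 : Matrix (Fin l) (Fin l) k) := by
    simp only [mul_neg, sub_mul, mul_sub, mul_one, one_mul, hJ]; abel
  rw [e1, e2, e3, e4]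

/-- unipotent upper triangular symplectic -/
lemma symp_unip {S : Matrix (Fin l) (Fin l) k} (hS : Sᵀ = S) :
    (fromBlocks 1 S 0 1 : Matrix (Fin l ⊕ Fin l) (Fin l ⊕ Fin l) k)ᵀ *
      fromBlocks 0 1 (-1) 0 * fromBlocks 1 S 0 1 = fromBlocks 0 1 (-1) 0 := by
  rw [fromBlocks_transpose, transpose_one, transpose_zero, fromBlocks_multiply,
    fromBlocks_multiply]
  simp [hS]

/-- Levi part symplectic -/
lemma symp_levi {U W : Matrix (Fin l) (Fin l) k} (hUW : Uᵀ * W = 1) :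
    (fromBlocks U 0 0 W : Matrix (Fin l ⊕ Fin l) (Fin l ⊕ Fin l) k)ᵀ *
      fromBlocks 0 1 (-1) 0 * fromBlocks U 0 0 W = fromBlocks 0 1 (-1) 0 := by
  have hWU : Wᵀ * U = 1 := by
    have h2 := congrArg transpose hUW
    rwa [transpose_mul, transpose_transpose, transpose_one] at h2
  rw [fromBlocks_transpose, transpose_zero, fromBlocks_multiply, fromBlocks_multiply]
  simp [hUW, hWU]

/-- permutation matrix -/
noncomputable def Pm (k : Type*) [Field k] (l : ℕ) (σ : Equiv.Perm (Fin l)) :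
    Matrix (Fin l) (Fin l) k :=
  Matrix.of fun i j => if σ j = i then 1 else 0

lemma Pm_mul_Pm_symm (σ : Equiv.Perm (Fin l)) : Pm k l σ * Pm k l σ.symm = 1 := by
  ext i j
  rw [Matrix.mul_apply]
  simp only [Pm, Matrix.of_apply]
  rw [Finset.sum_eq_single (σ.symm j)]
  · simp [Matrix.one_apply, eq_comm]
  · intro b _ hb
    rw [if_neg (Ne.symm hb), mul_zero]
  · simp

lemma Pm_symm_mul_Pm (σ : Equiv.Perm (Fin l)) : Pm k l σ.symm * Pm k l σ = 1 := by
  have := Pm_mul_Pm_symm (k := k) (l := l) σ.symm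
  simpa using this

lemma Pm_mul_diagonal (σ : Equiv.Perm (Fin l)) (d : Fin l → k) :
    Pm k l σ * diagonal d = diagonal (fun i => d (σ.symm i)) * Pm k l σ := by
  ext i j
  rw [Matrix.mul_apply, Matrix.mul_apply]
  rw [Finset.sum_eq_single j, Finset.sum_eq_single i]
  · simp only [Pm, Matrix.of_apply, diagonal_apply]
    by_cases h : σ j = i
    · subst h; simp
    · simp [h]
  · intro b _ hb; simp [diagonal_apply, Ne.symm hb]
  · simp
  · intro b _ hb; simp [diagonal_apply, hb, Pm]
  · simp

/-- a permutation moving a predicate to an initial segment -/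
lemma exists_perm_indicator (p : Fin l → Prop) [DecidablePred p] :
    ∃ τ : Equiv.Perm (Fin l), ∀ j, p (τ j) ↔ (j : ℕ) < Fintype.card {i // p i} := by
  set r := Fintype.card {i // p i} with hr
  have hrl : r ≤ l := by
    rw [hr]; simpa using Fintype.card_subtype_le p
  have eLt : {j : Fin l // (j : ℕ) < r} ≃ Fin r :=
    { toFun := fun x => ⟨x.1.1, x.2⟩
      invFun := fun m => ⟨⟨m.1, lt_of_lt_of_le m.2 hrl⟩, m.2⟩
      left_inv := fun x => Subtype.ext (Fin.ext rfl)
      right_inv := fun m => rfl }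
  have hcardLt : Fintype.card {j : Fin l // (j : ℕ) < r} = r := by
    rw [Fintype.card_congr eLt, Fintype.card_fin]
  have e₁ : {j : Fin l // (j : ℕ) < r} ≃ {i // p i} :=
    Fintype.equivOfCardEq (by rw [hcardLt, hr])
  have e₂ : {j : Fin l // ¬ ((j : ℕ) < r)} ≃ {i // ¬ p i} :=
    Fintype.equivOfCardEq (by
      rw [Fintype.card_subtype_compl, Fintype.card_subtype_compl, hcardLt, Fintype.card_fin, hr])
  refine ⟨(Equiv.sumCompl (fun j : Fin l => (j : ℕ) < r)).symm.trans
      ((e₁.sumCongr e₂).trans (Equiv.sumCompl p)), fun j => ?_⟩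
  by_cases h : (j : ℕ) < r
  · simp only [Equiv.trans_apply]
    rw [Equiv.sumCompl_symm_apply_of_pos (p := fun j : Fin l => (j : ℕ) < r) (a := j) h,
      Equiv.sumCongr_apply, Sum.map_inl, Equiv.sumCompl_apply_inl]
    exact ⟨fun _ => h, fun _ => (e₁ ⟨j, h⟩).2⟩
  · simp only [Equiv.trans_apply]
    rw [Equiv.sumCompl_symm_apply_of_neg (p := fun j : Fin l => (j : ℕ) < r) (a := j) h,
      Equiv.sumCongr_apply, Sum.map_inr, Equiv.sumCompl_apply_inr]
    exact ⟨fun hp => absurd hp (e₂ ⟨j, h⟩).2, fun hlt => absurd hlt h⟩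

/-- rank normal form over a field -/
lemma rank_nf (C : Matrix (Fin l) (Fin l) k) :
    ∃ r, r ≤ l ∧ ∃ U V : Matrix (Fin l) (Fin l) k, IsUnit U.det ∧ IsUnit V.det ∧
      U * C * V = Jd k l r := by
  classical
  obtain ⟨L, L', D, hLL⟩ := Matrix.Pivot.exists_list_transvec_mul_mul_list_transvec_eq_diagonal C
  set U₀ := (L.map Matrix.TransvectionStruct.toMatrix).prod with hU₀
  set V₀ := (L'.map Matrix.TransvectionStruct.toMatrix).prod with hV₀
  have hU₀det : IsUnit U₀.det := by
    rw [hU₀, Matrix.TransvectionStruct.det_toMatrix_prod]; exact isUnit_one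
  have hV₀det : IsUnit V₀.det := by
    rw [hV₀, Matrix.TransvectionStruct.det_toMatrix_prod]; exact isUnit_one
  have hediag : IsUnit (diagonal (fun i => if D i = 0 then 1 else (D i)⁻¹)).det := by
    rw [Matrix.det_diagonal]
    refine IsUnit.of_mul_eq_one (∏ i, (if D i = 0 then 1 else (D i)⁻¹)⁻¹) ?_
    rw [← Finset.prod_mul_distrib]
    refine Finset.prod_eq_one fun i _ => ?_
    by_cases h : D i = 0 <;> simp [h]
  obtain ⟨τ, hτ⟩ := exists_perm_indicator (fun i => D i ≠ 0)
  set r := Fintype.card {i // D i ≠ 0} with hr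
  have hrl : r ≤ l := by rw [hr]; simpa using Fintype.card_subtype_le (fun i => D i ≠ 0)
  refine ⟨r, hrl, Pm k l τ.symm * (diagonal (fun i => if D i = 0 then 1 else (D i)⁻¹) * U₀),
    V₀ * Pm k l τ, ?_, ?_, ?_⟩
  · rw [Matrix.det_mul, Matrix.det_mul]
    exact ((isUnit_det_of_right_inverse (Pm_symm_mul_Pm τ)).mul (hediag.mul hU₀det))
  · rw [Matrix.det_mul]
    exact hV₀det.mul (isUnit_det_of_left_inverse (Pm_symm_mul_Pm τ))
  · have key : Pm k l τ.symm * (diagonal (fun i => if D i = 0 then 1 else (D i)⁻¹) *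
        (U₀ * C * V₀)) * Pm k l τ = Jd k l r := by
      rw [hLL, diagonal_mul_diagonal]
      have hd : (fun i => (if D i = 0 then (1:k) else (D i)⁻¹) * D i) =
          fun i => if D i ≠ 0 then (1:k) else 0 := by
        funext i
        by_cases h : D i = 0 <;> simp [h]
      rw [hd, Pm_mul_diagonal]
      have h2 : (fun i => if D (τ.symm.symm i) ≠ 0 then (1:k) else 0) =
          fun i : Fin l => if (i : ℕ) < r then (1:k) else 0 := by
        funext i
        rw [Equiv.symm_symm]
        by_cases h : (i : ℕ) < r
        · rw [if_pos ((hτ i).mpr h), if_pos h]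
        · rw [if_neg (fun hp' => h ((hτ i).mp hp')), if_neg h]
      rw [h2, Jd, mul_assoc, Pm_symm_mul_Pm, mul_one]
    calc Pm k l τ.symm * (diagonal (fun i => if D i = 0 then 1 else (D i)⁻¹) * U₀) * C *
          (V₀ * Pm k l τ)
        = Pm k l τ.symm * (diagonal (fun i => if D i = 0 then 1 else (D i)⁻¹) *
          (U₀ * C * V₀)) * Pm k l τ := by noncomm_ring
      _ = Jd k l r := key

/-- rank of the canonical projector -/
lemma rank_Jd (r : ℕ) (hrl : r ≤ l) : (Jd k l r).rank = r := by
  classical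
  rw [Jd, Matrix.rank_diagonal]
  have : ∀ i : Fin l, ((if (i : ℕ) < r then (1:k) else 0) ≠ 0) ↔ (i : ℕ) < r := by
    intro i; by_cases h : (i : ℕ) < r <;> simp [h]
  rw [Fintype.card_congr (Equiv.subtypeEquivRight this)]
  refine Fintype.card_congr ?_ |>.trans (Fintype.card_fin r)
  exact { toFun := fun x => ⟨x.1.1, x.2⟩
          invFun := fun m => ⟨⟨m.1, lt_of_lt_of_le m.2 hrl⟩, m.2⟩
          left_inv := fun x => Subtype.ext (Fin.ext rfl)
          right_inv := fun m => rfl }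

noncomputable def Ed (k : Type*) [Field k] (l : ℕ) (j : Fin l) : Matrix (Fin l) (Fin l) k :=
  diagonal fun m => if m = j then 1 else 0

lemma wblock (w : Fin l → Matrix (Fin l ⊕ Fin l) (Fin l ⊕ Fin l) k)
    (hw : ∀ j, w j = 1 + Matrix.single (Sum.inl j) (Sum.inr j) 1
        - Matrix.single (Sum.inr j) (Sum.inl j) 1
        - Matrix.single (Sum.inl j) (Sum.inl j) 1
        - Matrix.single (Sum.inr j) (Sum.inr j) 1) (j : Fin l) :
    w j = fromBlocks (1 - Ed k l j) (Ed k l j) (-(Ed k l j)) (1 - Ed k l j) := by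
  rw [hw j]
  ext a b
  rcases a with a | a <;> rcases b with b | b <;>
    simp [Matrix.single, Ed, fromBlocks, one_apply, diagonal, Matrix.sub_apply,
      Matrix.add_apply] <;>
    by_cases h1 : a = j <;> by_cases h2 : b = j <;>
      simp [h1, h2] <;> try tauto

lemma step_blocks (m : ℕ) (jm : Fin l) (hjm : (jm : ℕ) = m) :
    Mw k l m * fromBlocks (1 - Ed k l jm) (Ed k l jm) (-(Ed k l jm)) (1 - Ed k l jm) =
      Mw k l (m + 1) := by
  set J := Jd k l m
  set E := Ed k l jm
  have hJE : J * E = 0 := by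
    rw [show J * E = diagonal (fun j : Fin l => (if (j:ℕ) < m then (1:k) else 0) *
      (if j = jm then 1 else 0)) from diagonal_mul_diagonal _ _]
    rw [show (0 : Matrix (Fin l) (Fin l) k) = diagonal (fun _ => 0) from (diagonal_zero).symm]
    refine congrArg diagonal (funext fun j => ?_)
    by_cases h1 : (j:ℕ) < m <;> by_cases h2 : j = jm <;> simp [h1, h2] <;> subst h2 <;> omega
  have hsum : J + E = Jd k l (m + 1) := by
    rw [show J + E = diagonal (fun j : Fin l => (if (j:ℕ) < m then (1:k) else 0) +
      (if j = jm then 1 else 0)) from (diagonal_add _ _)]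
    refine congrArg diagonal (funext fun j => ?_)
    by_cases h2 : j = jm
    · have h3 : ¬ ((j:ℕ) < m) := by rw [h2, hjm]; omega
      have h4 : (j:ℕ) < m + 1 := by rw [h2, hjm]; omega
      rw [h2] at h3 h4
      simp [h2, h3, h4]
    · have hne : (j:ℕ) ≠ m := fun h => h2 (Fin.ext (by rw [hjm]; exact h))
      by_cases h1 : (j:ℕ) < m
      · have h4 : (j:ℕ) < m + 1 := by omega
        simp [h1, h2, h4]
      · have h4 : ¬ ((j:ℕ) < m + 1) := by omega
        simp [h1, h2, h4]
  have e11 : (1 - J) * (1 - E) + J * (-E) = 1 - (J + E) := by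
    simp only [sub_mul, mul_sub, one_mul, mul_one, mul_neg, hJE]; abel
  have e12 : (1 - J) * E + J * (1 - E) = J + E := by
    simp only [sub_mul, mul_sub, one_mul, mul_one, hJE]; abel
  have e21 : -J * (1 - E) + (1 - J) * (-E) = -(J + E) := by
    simp only [neg_mul, mul_sub, sub_mul, mul_one, one_mul, mul_neg, hJE]; abel
  have e22 : -J * E + (1 - J) * (1 - E) = 1 - (J + E) := by
    simp only [neg_mul, mul_sub, sub_mul, mul_one, one_mul, hJE]; abel
  rw [Mw, Mw, fromBlocks_multiply, e11, e12, e21, e22, hsum]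

lemma omega_prod (w : Fin l → Matrix (Fin l ⊕ Fin l) (Fin l ⊕ Fin l) k)
    (hw : ∀ j, w j = 1 + Matrix.single (Sum.inl j) (Sum.inr j) 1
        - Matrix.single (Sum.inr j) (Sum.inl j) 1
        - Matrix.single (Sum.inl j) (Sum.inl j) 1
        - Matrix.single (Sum.inr j) (Sum.inr j) 1) (m : ℕ) (hm : m ≤ l) :
    ((List.finRange l).map (fun j : Fin l => if (j : ℕ) < m then w j else 1)).prod =
      Mw k l m := by
  have hsplit : ((List.finRange l).map (fun j : Fin l => if (j:ℕ) < m then w j else 1)) =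
      ((List.finRange l).take m).map w ++ List.replicate (l - m) 1 := by
    apply List.ext_getElem
    · simp; omega
    · intro n h1 h2
      simp only [List.length_map, List.length_finRange] at h1
      by_cases hn : n < m
      · rw [List.getElem_append_left (by simp; omega)]
        simp [List.getElem_take, hn]
      · rw [List.getElem_append_right (by simp; omega)]
        simp [hn]
  rw [hsplit, List.prod_append, List.prod_replicate, one_pow, mul_one]
  clear hsplit
  induction m with
  | zero =>
      have hJ0 : Jd k l 0 = 0 := by
        rw [Jd, show (0 : Matrix (Fin l) (Fin l) k) = diagonal (fun _ => 0) from
          (diagonal_zero).symm]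
        refine congrArg diagonal (funext fun j => ?_)
        simp
      simp only [List.take_zero, List.map_nil, List.prod_nil, Mw, hJ0]
      norm_num [fromBlocks_one]
  | succ n ih =>
      have hn : n ≤ l := by omega
      have hnl : n < l := by omega
      have hget : (List.finRange l)[n]?.toList = [(⟨n, hnl⟩ : Fin l)] := by
        rw [List.getElem?_eq_getElem (by simpa using hnl)]
        simp [List.getElem_finRange, Fin.ext_iff]
      rw [List.take_succ, hget, List.map_append, List.prod_append, List.map_singleton,
        List.prod_singleton, ih hn, wblock w hw, step_blocks n ⟨n, hnl⟩ rfl]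

/-- products of lower-left-zero matrices are lower-left-zero -/
lemma lowerleft_mul {a b : Matrix (Fin l ⊕ Fin l) (Fin l ⊕ Fin l) k}
    (ha : ∀ i j, a (Sum.inr i) (Sum.inl j) = 0)
    (hb : ∀ i j, b (Sum.inr i) (Sum.inl j) = 0) :
    ∀ i j, (a * b) (Sum.inr i) (Sum.inl j) = 0 := by
  intro i j
  rw [Matrix.mul_apply, Fintype.sum_sum_type]
  simp [ha, hb]

lemma Mw_transpose (r : ℕ) : (Mw k l r)ᵀ =
    fromBlocks (1 - Jd k l r) (-(Jd k l r)) (Jd k l r) (1 - Jd k l r) := by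
  rw [Mw, fromBlocks_transpose, transpose_neg, transpose_sub, transpose_one, Jd_transpose]

/-- the core lemma: a symplectic matrix with lower-left block -Jd r lies in the double coset -/
lemma core (r : ℕ) (g : Matrix (Fin l ⊕ Fin l) (Fin l ⊕ Fin l) k)
    (hg : gᵀ * fromBlocks 0 1 (-1) 0 * g = fromBlocks 0 1 (-1) 0)
    (hC : toBlocks₂₁ g = -(Jd k l r)) :
    ∃ p q : Matrix (Fin l ⊕ Fin l) (Fin l ⊕ Fin l) k,
      (pᵀ * fromBlocks 0 1 (-1) 0 * p = fromBlocks 0 1 (-1) 0 ∧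
        ∀ i j, p (Sum.inr i) (Sum.inl j) = 0) ∧
      (qᵀ * fromBlocks 0 1 (-1) 0 * q = fromBlocks 0 1 (-1) 0 ∧
        ∀ i j, q (Sum.inr i) (Sum.inl j) = 0) ∧
      g = p * Mw k l r * q := by
  set J := Jd k l r with hJdef
  have hJJ : J * J = J := Jd_mul_Jd r
  have hJt : Jᵀ = J := Jd_transpose r
  set A := toBlocks₁₁ g with hA
  set B := toBlocks₁₂ g with hB
  set D := toBlocks₂₂ g with hD
  have hgb : g = fromBlocks A B (-J) D := by
    rw [hA, hB, hD, ← hC, fromBlocks_toBlocks]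
  -- the column relation in the (1,1) block
  have hrel : J * A = Aᵀ * J := by
    have h1 := hg
    rw [hgb, fromBlocks_transpose, fromBlocks_multiply, fromBlocks_multiply] at h1
    have h11 := congrArg toBlocks₁₁ h1
    rw [toBlocks_fromBlocks₁₁, toBlocks_fromBlocks₁₁] at h11
    have h11' : J * A - Aᵀ * J = 0 := by
      calc J * A - Aᵀ * J
          = (Aᵀ * 0 + (-J)ᵀ * (-1)) * A + (Aᵀ * 1 + (-J)ᵀ * 0) * (-J) := by
            simp only [transpose_neg, hJt]; noncomm_ring
        _ = 0 := h11
    exact sub_eq_zero.mp h11'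
  have hSt : (J * A)ᵀ = J * A := by
    rw [transpose_mul, hJt, ← hrel]
  have hSmt : (-(J * A))ᵀ = -(J * A) := by rw [transpose_neg, hSt]
  have hJAJ : J * A * J = J * A := by
    calc J * A * J = Aᵀ * J * J := by rw [hrel]
      _ = Aᵀ * J := by rw [mul_assoc, hJJ]
      _ = J * A := hrel.symm
  have hqsymp : ((Mw k l r)ᵀ * (fromBlocks 1 (J * A) 0 1 * g))ᵀ * fromBlocks 0 1 (-1) 0 *
      ((Mw k l r)ᵀ * (fromBlocks 1 (J * A) 0 1 * g)) = fromBlocks 0 1 (-1) 0 :=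
    symp_mul (symp_transpose (symp_Mw r)) (symp_mul (symp_unip hSt) hg)
  have hz : J * (1 * A + (J * A) * (-J)) + (1 - J) * (0 * A + 1 * (-J)) = 0 := by
    have e : J * (1 * A + (J * A) * (-J)) + (1 - J) * (0 * A + 1 * (-J))
        = J * A - (J * J) * A * J - J + J * J := by noncomm_ring
    rw [e, hJJ, hJAJ]
    abel
  have hqform : (Mw k l r)ᵀ * (fromBlocks 1 (J * A) 0 1 * g) =
      fromBlocks ((1 - J) * (1 * A + (J * A) * (-J)) + (-J) * (0 * A + 1 * (-J)))
      ((1 - J) * (1 * B + (J * A) * D) + (-J) * (0 * B + 1 * D))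
      (J * (1 * A + (J * A) * (-J)) + (1 - J) * (0 * A + 1 * (-J)))
      (J * (1 * B + (J * A) * D) + (1 - J) * (0 * B + 1 * D)) := by
    rw [Mw_transpose, ← hJdef]
    conv_lhs => rw [hgb]
    rw [fromBlocks_multiply, fromBlocks_multiply]
  rw [hz] at hqform
  have hnn : (fromBlocks 1 (-(J * A)) 0 1 : Matrix (Fin l ⊕ Fin l) (Fin l ⊕ Fin l) k) *
      fromBlocks 1 (J * A) 0 1 = 1 := by
    rw [fromBlocks_multiply, ← fromBlocks_one]
    congr 1 <;> simp
  refine ⟨fromBlocks 1 (-(J * A)) 0 1, (Mw k l r)ᵀ * (fromBlocks 1 (J * A) 0 1 * g),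
    ⟨symp_unip hSmt, fun i j => by simp [fromBlocks]⟩,
    ⟨hqsymp, fun i j => by rw [hqform]; simp [fromBlocks]⟩, ?_⟩
  have hMM := Mw_mul_transpose (k := k) (l := l) r
  calc g = (fromBlocks 1 (-(J * A)) 0 1 * fromBlocks 1 (J * A) 0 1) * g := by
        rw [hnn, one_mul]
    _ = (fromBlocks 1 (-(J * A)) 0 1 * (Mw k l r * (Mw k l r)ᵀ)) *
        (fromBlocks 1 (J * A) 0 1) * g := by rw [hMM, mul_one]
    _ = fromBlocks 1 (-(J * A)) 0 1 * Mw k l r *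
        ((Mw k l r)ᵀ * (fromBlocks 1 (J * A) 0 1 * g)) := by noncomm_ring

/-- rank of the lower-left block of an element of the double coset P (Mw r) P -/
lemma rank_coset (r : ℕ) (hrl : r ≤ l) (p q : Matrix (Fin l ⊕ Fin l) (Fin l ⊕ Fin l) k)
    (hpsymp : pᵀ * fromBlocks 0 1 (-1) 0 * p = fromBlocks 0 1 (-1) 0)
    (hp0 : ∀ i j, p (Sum.inr i) (Sum.inl j) = 0)
    (hqsymp : qᵀ * fromBlocks 0 1 (-1) 0 * q = fromBlocks 0 1 (-1) 0)
    (hq0 : ∀ i j, q (Sum.inr i) (Sum.inl j) = 0) :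
    (toBlocks₂₁ (p * Mw k l r * q)).rank = r := by
  classical
  set J := Jd k l r with hJdef
  set Ap := toBlocks₁₁ p with hAp
  set Bp := toBlocks₁₂ p with hBp
  set Dp := toBlocks₂₂ p with hDp
  have hp21 : toBlocks₂₁ p = 0 := by
    ext i j; simp [toBlocks₂₁, hp0]
  have hpb : p = fromBlocks Ap Bp 0 Dp := by
    rw [hAp, hBp, hDp, ← hp21, fromBlocks_toBlocks]
  set Aq := toBlocks₁₁ q with hAq
  set Bq := toBlocks₁₂ q with hBq
  set Dq := toBlocks₂₂ q with hDq
  have hq21 : toBlocks₂₁ q = 0 := by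
    ext i j; simp [toBlocks₂₁, hq0]
  have hqb : q = fromBlocks Aq Bq 0 Dq := by
    rw [hAq, hBq, hDq, ← hq21, fromBlocks_toBlocks]
  -- invertibility of the diagonal blocks
  have hpinv := symp_right_inv hpsymp
  rw [hpb, symp_inv_blocks, fromBlocks_multiply, ← fromBlocks_one] at hpinv
  have hp22 := congrArg toBlocks₂₂ hpinv
  rw [toBlocks_fromBlocks₂₂, toBlocks_fromBlocks₂₂] at hp22
  have hDpdet : IsUnit Dp.det := by
    have : Dp * Apᵀ = 1 := by
      calc Dp * Apᵀ = 0 * (-Bpᵀ) + Dp * Apᵀ := by noncomm_ring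
        _ = 1 := hp22
    exact isUnit_det_of_right_inverse this
  have hqinv := symp_right_inv hqsymp
  rw [hqb, symp_inv_blocks, fromBlocks_multiply, ← fromBlocks_one] at hqinv
  have hq22 := congrArg toBlocks₂₂ hqinv
  rw [toBlocks_fromBlocks₂₂, toBlocks_fromBlocks₂₂] at hq22
  have hAqdet : IsUnit Aq.det := by
    have h1 : Dq * Aqᵀ = 1 := by
      calc Dq * Aqᵀ = 0 * (-Bqᵀ) + Dq * Aqᵀ := by noncomm_ring
        _ = 1 := hq22
    have := isUnit_det_of_left_inverse h1
    rwa [Matrix.det_transpose] at this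
  -- compute the lower-left block of p * Mw r * q
  have hblock : toBlocks₂₁ (p * Mw k l r * q) = -(Dp * (J * Aq)) := by
    rw [hpb, hqb, Mw, ← hJdef, fromBlocks_multiply, fromBlocks_multiply,
      toBlocks_fromBlocks₂₁]
    noncomm_ring
  have hnegdet : IsUnit (-Dp).det := by
    rw [Matrix.det_neg]
    exact (isUnit_one.neg.pow _).mul hDpdet
  rw [hblock, show -(Dp * (J * Aq)) = (-Dp) * (J * Aq) from (neg_mul _ _).symm,
    Matrix.rank_mul_eq_right_of_isUnit_det (-Dp) (J * Aq) hnegdet,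
    Matrix.rank_mul_eq_left_of_isUnit_det Aq J hAqdet, hJdef, rank_Jd r hrl]


lemma blockdiag_mul (X Y X' Y' : Matrix (Fin l) (Fin l) k) :
    (fromBlocks X 0 0 Y : Matrix (Fin l ⊕ Fin l) (Fin l ⊕ Fin l) k) * fromBlocks X' 0 0 Y' =
      fromBlocks (X * X') 0 0 (Y * Y') := by
  rw [fromBlocks_multiply]
  simp

end Stmt19Aux

/-- The Siegel parabolic double coset decomposition of Sp(2l,k):
Sp(2l,k) = ⊔_{i=0}^{l} P ω_i P with ω_i = w_{1,-1} ⋯ w_{i,-i}. -/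
theorem stmt19 (k : Type*) [Field k] (l : ℕ)
    (P : Matrix (Fin l ⊕ Fin l) (Fin l ⊕ Fin l) k → Prop)
    (hP : ∀ p, P p ↔ (pᵀ * fromBlocks 0 1 (-1) 0 * p = fromBlocks 0 1 (-1) 0 ∧
        ∀ i j : Fin l, p (Sum.inr i) (Sum.inl j) = 0))
    (w : Fin l → Matrix (Fin l ⊕ Fin l) (Fin l ⊕ Fin l) k)
    (hw : ∀ j, w j = 1 + Matrix.single (Sum.inl j) (Sum.inr j) 1
        - Matrix.single (Sum.inr j) (Sum.inl j) 1
        - Matrix.single (Sum.inl j) (Sum.inl j) 1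
        - Matrix.single (Sum.inr j) (Sum.inr j) 1)
    (ω : Fin (l + 1) → Matrix (Fin l ⊕ Fin l) (Fin l ⊕ Fin l) k)
    (hω : ∀ i, ω i = ((List.finRange l).map
        (fun j => if j.val < i.val then w j else 1)).prod)
    (g : Matrix (Fin l ⊕ Fin l) (Fin l ⊕ Fin l) k)
    (hg : gᵀ * fromBlocks 0 1 (-1) 0 * g = fromBlocks 0 1 (-1) 0) :
    ∃! i : Fin (l + 1), ∃ p q, P p ∧ P q ∧ g = p * ω i * q := by
  classical
  have hωMw : ∀ i : Fin (l + 1), ω i = Stmt19Aux.Mw k l i.val := fun i => by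
    rw [hω i]
    exact Stmt19Aux.omega_prod w hw i.val (Nat.lt_succ_iff.mp i.2)
  -- the rank invariant
  have hrank : ∀ (i' : Fin (l + 1)) (p q : Matrix (Fin l ⊕ Fin l) (Fin l ⊕ Fin l) k),
      P p → P q → g = p * ω i' * q → (toBlocks₂₁ g).rank = i'.val := by
    intro i' p q hpP hqP hgeq
    obtain ⟨hps, hp0⟩ := (hP p).mp hpP
    obtain ⟨hqs, hq0⟩ := (hP q).mp hqP
    rw [hgeq, hωMw]
    exact Stmt19Aux.rank_coset i'.val (Nat.lt_succ_iff.mp i'.2) p q hps hp0 hqs hq0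
  -- existence via rank normal form and the core lemma
  obtain ⟨r, hrl, U, V, hUdet, hVdet, hUCV⟩ := Stmt19Aux.rank_nf (toBlocks₂₁ g)
  have hUiU : U⁻¹ * U = 1 := nonsing_inv_mul U hUdet
  have hUUi : U * U⁻¹ = 1 := mul_nonsing_inv U hUdet
  have hVtdet : IsUnit (Vᵀ).det := by rwa [Matrix.det_transpose]
  have hVtiVt : (Vᵀ)⁻¹ * Vᵀ = 1 := nonsing_inv_mul _ hVtdet
  have hVtVti : Vᵀ * (Vᵀ)⁻¹ = 1 := mul_nonsing_inv _ hVtdet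
  have hVVi : V * V⁻¹ = 1 := mul_nonsing_inv V hVdet
  have hViV : V⁻¹ * V = 1 := nonsing_inv_mul V hVdet
  have hpUsymp := Stmt19Aux.symp_levi (k := k) (l := l) (U := -(U⁻¹)ᵀ) (W := -U)
    (by rw [transpose_neg, transpose_transpose, neg_mul_neg]; exact hUiU)
  have hpVsymp := Stmt19Aux.symp_levi (k := k) (l := l) (U := V) (W := (Vᵀ)⁻¹) hVtVti
  have hpUinvsymp := Stmt19Aux.symp_levi (k := k) (l := l) (U := -Uᵀ) (W := -U⁻¹)
    (by rw [transpose_neg, transpose_transpose, neg_mul_neg]; exact hUUi)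
  have hpVinvsymp := Stmt19Aux.symp_levi (k := k) (l := l) (U := V⁻¹) (W := Vᵀ)
    (by rw [← transpose_mul, hVVi, transpose_one])
  have hpUinvpU : (fromBlocks (-Uᵀ) 0 0 (-U⁻¹) : Matrix (Fin l ⊕ Fin l) (Fin l ⊕ Fin l) k) *
      fromBlocks (-(U⁻¹)ᵀ) 0 0 (-U) = 1 := by
    rw [Stmt19Aux.blockdiag_mul, neg_mul_neg, neg_mul_neg, ← transpose_mul, hUiU,
      transpose_one, fromBlocks_one]
  have hpVpVinv : (fromBlocks V 0 0 ((Vᵀ)⁻¹) : Matrix (Fin l ⊕ Fin l) (Fin l ⊕ Fin l) k) *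
      fromBlocks V⁻¹ 0 0 Vᵀ = 1 := by
    rw [Stmt19Aux.blockdiag_mul, hVVi, hVtiVt, fromBlocks_one]
  have hg'symp := Stmt19Aux.symp_mul (Stmt19Aux.symp_mul hpUsymp hg) hpVsymp
  have hg'C : toBlocks₂₁ ((fromBlocks (-(U⁻¹)ᵀ) 0 0 (-U) :
      Matrix (Fin l ⊕ Fin l) (Fin l ⊕ Fin l) k) * g * fromBlocks V 0 0 ((Vᵀ)⁻¹)) =
      -(Stmt19Aux.Jd k l r) := by
    have hcompute : toBlocks₂₁ ((fromBlocks (-(U⁻¹)ᵀ) 0 0 (-U) :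
        Matrix (Fin l ⊕ Fin l) (Fin l ⊕ Fin l) k) * g * fromBlocks V 0 0 ((Vᵀ)⁻¹)) =
        (-U) * toBlocks₂₁ g * V := by
      conv_lhs => rw [← fromBlocks_toBlocks g]
      rw [fromBlocks_multiply, fromBlocks_multiply, toBlocks_fromBlocks₂₁]
      noncomm_ring
    rw [hcompute, show (-U) * toBlocks₂₁ g * V = -(U * toBlocks₂₁ g * V) by noncomm_ring, hUCV]
  obtain ⟨p', q', ⟨hp's, hp'0⟩, ⟨hq's, hq'0⟩, hdecomp⟩ := Stmt19Aux.core r _ hg'symp hg'C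
  set pUinv := (fromBlocks (-Uᵀ) 0 0 (-U⁻¹) : Matrix (Fin l ⊕ Fin l) (Fin l ⊕ Fin l) k)
    with hpUinvdef
  set pVinv := (fromBlocks V⁻¹ 0 0 Vᵀ : Matrix (Fin l ⊕ Fin l) (Fin l ⊕ Fin l) k)
    with hpVinvdef
  have hgeq : g = (pUinv * p') * Stmt19Aux.Mw k l r * (q' * pVinv) := by
    calc g = (pUinv * fromBlocks (-(U⁻¹)ᵀ) 0 0 (-U)) * g *
          (fromBlocks V 0 0 ((Vᵀ)⁻¹) * pVinv) := by
          rw [hpUinvpU, hpVpVinv, one_mul, mul_one]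
      _ = pUinv * (fromBlocks (-(U⁻¹)ᵀ) 0 0 (-U) * g * fromBlocks V 0 0 ((Vᵀ)⁻¹)) * pVinv := by
          noncomm_ring
      _ = pUinv * (p' * Stmt19Aux.Mw k l r * q') * pVinv := by rw [hdecomp]
      _ = (pUinv * p') * Stmt19Aux.Mw k l r * (q' * pVinv) := by noncomm_ring
  have hpP : P (pUinv * p') := (hP _).mpr
    ⟨Stmt19Aux.symp_mul hpUinvsymp hp's,
     Stmt19Aux.lowerleft_mul (fun i j => by rw [hpUinvdef]; simp [fromBlocks]) hp'0⟩
  have hqP : P (q' * pVinv) := (hP _).mpr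
    ⟨Stmt19Aux.symp_mul hq's hpVinvsymp,
     Stmt19Aux.lowerleft_mul hq'0 (fun i j => by rw [hpVinvdef]; simp [fromBlocks])⟩
  have hil : r < l + 1 := by omega
  refine ⟨⟨r, hil⟩, ⟨pUinv * p', q' * pVinv, hpP, hqP, ?_⟩, ?_⟩
  · rw [hωMw ⟨r, hil⟩]
    exact hgeq
  · intro j hj
    obtain ⟨p₂, q₂, hp₂, hq₂, hgeq₂⟩ := hj
    have h2 := hrank j p₂ q₂ hp₂ hq₂ hgeq₂
    have h1 := hrank ⟨r, hil⟩ (pUinv * p') (q' * pVinv) hpP hqP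
      (by rw [hωMw ⟨r, hil⟩]; exact hgeq)
    exact Fin.ext (h2.symm.trans h1)
end
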